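/- arXiv:2104.02675 — 4 statements merged into one kernel-verified Lean document; each statement's English description precedes it below -/
import Mathlib

section
/- Let (W,S) be a Coxeter system and J ⊆ S. If y, z ∈ W satisfy y ≤_R z in the right weak order, then the minimal-length coset representatives satisfy ᴶy ≤_R ᴶz. -/
namespace CoxPop

variable {B W : Type*} [Group W] {M : CoxeterMatrix B} (cs : CoxeterSystem M W)

/-- The standard parabolic subgroup generated by the simple reflections indexed by `J`. -/
def parabolic (J : Set B) : Subgroup W :=
  Subgroup.closure (cs.simple '' J)

/-- The right descent set of `w`. -/
def D (w : W) : Set B := {i | cs.IsRightDescent w i}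

/-- `u` is a longest element of the standard parabolic subgroup `W_J`. -/
def IsLongestIn (J : Set B) (u : W) : Prop :=
  u ∈ parabolic cs J ∧ ∀ v ∈ parabolic cs J, cs.length v ≤ cs.length u

open Classical in
/-- The longest element `w₀(J)` of the standard parabolic subgroup `W_J`. -/
noncomputable def w0 (J : Set B) : W :=
  if h : ∃ u, IsLongestIn cs J u then h.choose else 1

/-- The Coxeter pop-stack-sorting operator: `Pop w = w * w₀(D_R(w))`. -/
noncomputable def Pop (w : W) : W := w * w0 cs (D cs w)

/-- The right weak order on `W`: `x ≤_R y` iff `ℓ(x) + ℓ(x⁻¹y) = ℓ(y)`. -/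
def rweakLE (x y : W) : Prop := cs.length x + cs.length (x⁻¹ * y) = cs.length y

/-- `u` is the minimal-length representative `ᴶw` of the right coset `W_J w`. -/
def IsMinRep (J : Set B) (w u : W) : Prop :=
  (∃ p ∈ parabolic cs J, u = p * w) ∧
    ∀ v : W, (∃ p ∈ parabolic cs J, v = p * w) → cs.length u ≤ cs.length v

/-- A map `f : W → W` is compulsive if `f(w) ≤_R w` and `f(w) ≤_R ws` for every
right descent `s` of `w`. -/
def Compulsive (f : W → W) : Prop :=
  ∀ w : W, rweakLE cs (f w) w ∧ ∀ i ∈ D cs w, rweakLE cs (f w) (w * cs.simple i)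

/-- The strong Bruhat order: `x ≤ y` iff some reduced word for `y` contains a
reduced word for `x` as a (not necessarily contiguous) subword. -/
def bruhatLE (x y : W) : Prop :=
  ∃ ω : List B, cs.wordProd ω = y ∧ ω.length = cs.length y ∧
    ∃ ω' : List B, ω'.Sublist ω ∧ cs.wordProd ω' = x ∧ ω'.length = cs.length x

/-- The Coxeter system is irreducible: its Coxeter diagram is connected, i.e. the
index set admits no nontrivial partition into two mutually commuting parts. -/
def Irreducible : Prop :=
  ∀ J : Set B, (∀ i ∈ J, ∀ j ∈ Jᶜ, M i j = 2) → J = ∅ ∨ J = Set.univ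

open CoxeterSystem List

open Classical in
/-- indicator of equality, valued in `ZMod 2` -/
noncomputable def chi {α : Type*} (x y : α) : ZMod 2 := if x = y then 1 else 0

lemma chi_congr {α : Type*} {x y x' y' : α} (h : (x = y) ↔ (x' = y')) :
    chi x y = chi x' y' := by
  unfold chi
  by_cases hx : x = y
  · rw [if_pos hx, if_pos (h.mp hx)]
  · rw [if_neg hx, if_neg (fun hc => hx (h.mpr hc))]

lemma two_nil : ∀ (a c : ZMod 2), a + c + c = a := by decide

lemma etaFun_involutive (i : B) : Function.Involutive
    (fun p : W × ZMod 2 => (cs.simple i * p.1 * cs.simple i, p.2 + chi p.1 (cs.simple i))) := by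
  intro p
  have hss := cs.simple_mul_simple_self i
  have h1 : cs.simple i * (cs.simple i * p.1 * cs.simple i) * cs.simple i = p.1 := by
    calc cs.simple i * (cs.simple i * p.1 * cs.simple i) * cs.simple i
        = (cs.simple i * cs.simple i) * p.1 * (cs.simple i * cs.simple i) := by group
      _ = p.1 := by rw [hss, one_mul, mul_one]
  have h2 : chi (cs.simple i * p.1 * cs.simple i) (cs.simple i) = chi p.1 (cs.simple i) := by
    apply chi_congr
    constructor
    · intro h
      have : cs.simple i * (cs.simple i * p.1 * cs.simple i) * cs.simple i
          = cs.simple i * cs.simple i * cs.simple i := by rw [h]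
      rw [h1] at this
      rw [this, cs.simple_mul_simple_self, one_mul]
    · intro h; rw [h, cs.simple_mul_simple_self, one_mul]
  ext
  · exact h1
  · simp only [h2]
    exact two_nil p.2 _

/-- the basic permutation of `W × ZMod 2` attached to a simple reflection -/
noncomputable def eta (i : B) : Equiv.Perm (W × ZMod 2) :=
  (etaFun_involutive cs i).toPerm

lemma eta_apply (i : B) (p : W × ZMod 2) :
    eta cs i p = (cs.simple i * p.1 * cs.simple i, p.2 + chi p.1 (cs.simple i)) := rfl

section Braid

lemma conj_eq_iff {W : Type*} [Group W] {g x y : W} : g * x * g⁻¹ = y ↔ x = g⁻¹ * y * g := by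
  constructor
  · intro h; rw [← h]; group
  · intro h; rw [h]; group

lemma braid_key {W : Type*} [Group W] {a b : W} (ha : a * a = 1) (hb : b * b = 1) :
    ∀ n : ℕ, b * (b * a) ^ n * b = ((b * a) ^ n)⁻¹ := by
  have hainv : a⁻¹ = a := by rw [inv_eq_iff_mul_eq_one, ha]
  have hbinv : b⁻¹ = b := by rw [inv_eq_iff_mul_eq_one, hb]
  intro n
  induction n with
  | zero => simpa using hb
  | succ n ih =>
    have h1 : b * (b * a) ^ (n + 1) * b = (b * (b * a) ^ n * b) * (b * (b * a) * b) := by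
      have hx : (b * (b * a) ^ n * b) * (b * (b * a) * b)
          = b * (b * a) ^ n * (b * b) * (b * a * b) := by group
      rw [hx, hb, mul_one, pow_succ]
      group
    have h2 : b * (b * a) * b = (b * a)⁻¹ := by
      rw [mul_inv_rev, hainv, hbinv]
      calc b * (b * a) * b = (b * b) * (a * b) := by group
        _ = a * b := by rw [hb, one_mul]
    rw [h1, ih, h2, ← mul_inv_rev, ← pow_succ']

lemma braid_conj1 {W : Type*} [Group W] {a b : W} (ha : a * a = 1) (hb : b * b = 1) (n : ℕ) :
    (b * a) ^ n * b * ((b * a) ^ n)⁻¹ = (b * a) ^ (2 * n) * b := by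
  have hbinv : b⁻¹ = b := by rw [inv_eq_iff_mul_eq_one, hb]
  have h := braid_key ha hb n
  have hb' : b * ((b * a) ^ n)⁻¹ = (b * a) ^ n * b := by
    rw [← h]
    calc b * (b * (b * a) ^ n * b) = (b * b) * ((b * a) ^ n * b) := by group
      _ = (b * a) ^ n * b := by rw [hb, one_mul]
  calc (b * a) ^ n * b * ((b * a) ^ n)⁻¹ = (b * a) ^ n * (b * ((b * a) ^ n)⁻¹) := by group
    _ = (b * a) ^ n * ((b * a) ^ n * b) := by rw [hb']
    _ = (b * a) ^ (2 * n) * b := by rw [two_mul, pow_add]; group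

lemma braid_conj2 {W : Type*} [Group W] {a b : W} (ha : a * a = 1) (hb : b * b = 1) (n : ℕ) :
    (b * a) ^ n * (b * a * b) * ((b * a) ^ n)⁻¹ = (b * a) ^ (2 * n + 1) * b := by
  calc (b * a) ^ n * (b * a * b) * ((b * a) ^ n)⁻¹
      = (b * a) ^ n * (b * a) * b * ((b * a) ^ n)⁻¹ := by group
    _ = (b * a) * ((b * a) ^ n * b * ((b * a) ^ n)⁻¹) := by rw [← pow_succ, pow_succ']; group
    _ = (b * a) * ((b * a) ^ (2 * n) * b) := by rw [braid_conj1 ha hb n]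
    _ = (b * a) ^ (2 * n + 1) * b := by rw [pow_succ']; group

end Braid

lemma eta_pow_apply (i j : B) (n : ℕ) (t : W) (ε : ZMod 2) :
    ((eta cs i * eta cs j) ^ n) (t, ε) =
      ((cs.simple i * cs.simple j) ^ n * t * ((cs.simple i * cs.simple j) ^ n)⁻¹,
        ε + ∑ k ∈ Finset.range (2 * n),
          chi t ((cs.simple j * cs.simple i) ^ k * cs.simple j)) := by
  set a := cs.simple i with ha
  set b := cs.simple j with hb
  have haa : a * a = 1 := cs.simple_mul_simple_self i
  have hbb : b * b = 1 := cs.simple_mul_simple_self j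
  have hainv : a⁻¹ = a := by rw [inv_eq_iff_mul_eq_one, haa]
  have hbinv : b⁻¹ = b := by rw [inv_eq_iff_mul_eq_one, hbb]
  induction n with
  | zero => simp
  | succ n ihn =>
    have hinvn : ((a * b) ^ n)⁻¹ = (b * a) ^ n := by
      rw [← inv_pow, mul_inv_rev, hainv, hbinv]
    have hinv2n : (a * b) ^ n = ((b * a) ^ n)⁻¹ := by rw [hinvn.symm, inv_inv]
    rw [pow_succ', Equiv.Perm.mul_apply, ihn, Equiv.Perm.mul_apply, eta_apply, eta_apply]
    set U := (a * b) ^ n * t * ((a * b) ^ n)⁻¹ with hU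
    have key1 : (U = b) ↔ (t = (b * a) ^ (2 * n) * b) := by
      rw [hU, conj_eq_iff, hinvn, hinv2n, braid_conj1 haa hbb n]
    have key2 : (b * U * b = a) ↔ (t = (b * a) ^ (2 * n + 1) * b) := by
      have step1 : (b * U * b = a) ↔ (U = b * a * b) := by
        constructor
        · intro h
          have h3 : b * (b * U * b) * b = b * a * b := by rw [h]
          calc U = (b * b) * U * (b * b) := by rw [hbb]; group
            _ = b * (b * U * b) * b := by group
            _ = b * a * b := h3
        · intro h
          rw [h]
          calc b * (b * a * b) * b = (b * b) * a * (b * b) := by group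
            _ = a := by rw [hbb]; group
      rw [step1, hU, conj_eq_iff, hinvn, hinv2n, braid_conj2 haa hbb n]
    refine Prod.ext ?_ ?_
    · show a * (b * U * b) * a = (a * b) ^ (n + 1) * t * ((a * b) ^ (n + 1))⁻¹
      calc a * (b * U * b) * a
          = (a * b) * (a * b) ^ n * t * (((a * b) ^ n)⁻¹ * (b * a)) := by rw [hU]; group
        _ = (a * b) ^ (n + 1) * t * ((a * b) ^ (n + 1))⁻¹ := by
            rw [pow_succ', mul_inv_rev, mul_inv_rev, hainv, hbinv]
    · show ε + ∑ k ∈ Finset.range (2 * n), chi t ((b * a) ^ k * b) + chi U b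
          + chi (b * U * b) a
          = ε + ∑ k ∈ Finset.range (2 * (n + 1)), chi t ((b * a) ^ k * b)
      have e1 : chi U b = chi t ((b * a) ^ (2 * n) * b) := chi_congr key1
      have e2 : chi (b * U * b) a = chi t ((b * a) ^ (2 * n + 1) * b) := chi_congr key2
      rw [e1, e2, show 2 * (n + 1) = (2 * n) + 1 + 1 by ring,
        Finset.sum_range_succ, Finset.sum_range_succ]
      push_cast
      ring

lemma eta_liftable : M.IsLiftable (fun i => eta cs i) := by
  intro i j
  apply Equiv.ext
  rintro ⟨t, ε⟩
  rw [eta_pow_apply, cs.simple_mul_simple_pow i j, Equiv.Perm.one_apply]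
  have h2 : (cs.simple j * cs.simple i) ^ (M i j) = 1 := cs.simple_mul_simple_pow' i j
  refine Prod.ext (by simp) ?_
  show ε + ∑ k ∈ Finset.range (2 * M i j), chi t ((cs.simple j * cs.simple i) ^ k * cs.simple j)
      = ε
  rw [two_mul, Finset.sum_range_add]
  have : ∀ k, chi t ((cs.simple j * cs.simple i) ^ (M i j + k) * cs.simple j)
      = chi t ((cs.simple j * cs.simple i) ^ k * cs.simple j) := by
    intro k; rw [pow_add, h2, one_mul]
  rw [Finset.sum_congr rfl (fun k _ => this k), ← add_assoc]
  exact two_nil ε _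

noncomputable def phi : W →* Equiv.Perm (W × ZMod 2) :=
  cs.lift ⟨fun i => eta cs i, eta_liftable cs⟩

lemma phi_simple (i : B) : phi cs (cs.simple i) = eta cs i :=
  cs.lift_apply_simple (eta_liftable cs) i

/-- sum of indicators: counts occurrences of `t` in `l`, mod 2 -/
noncomputable def cnt (l : List W) (t : W) : ZMod 2 := (l.map (chi t)).sum

lemma cnt_nil (t : W) : cnt ([] : List W) t = 0 := rfl

lemma cnt_cons (x : W) (l : List W) (t : W) : cnt (x :: l) t = chi t x + cnt l t := by
  simp [cnt]

lemma cnt_eq_zero_of_not_mem {l : List W} {t : W} (h : t ∉ l) : cnt l t = 0 := by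
  induction l with
  | nil => rfl
  | cons x l ih =>
    rw [cnt_cons]
    have hx : t ≠ x := fun hc => h (hc ▸ (List.mem_cons_self : x ∈ x :: l))
    rw [ih (fun hc => h (List.mem_cons_of_mem x hc))]
    unfold chi
    rw [if_neg hx, add_zero]

lemma mem_of_cnt_eq_one {l : List W} {t : W} (h : cnt l t = 1) : t ∈ l := by
  by_contra hc
  rw [cnt_eq_zero_of_not_mem hc] at h
  exact absurd h (by decide)

lemma phi_wordProd (ω : List B) (t : W) (ε : ZMod 2) :
    phi cs (cs.wordProd ω) (t, ε) =
      (cs.wordProd ω * t * (cs.wordProd ω)⁻¹, ε + cnt (cs.rightInvSeq ω) t) := by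
  induction ω generalizing ε with
  | nil => simp [cnt_nil]
  | cons i ω ih =>
    have hris : cs.rightInvSeq (i :: ω) =
        ((cs.wordProd ω)⁻¹ * cs.simple i * cs.wordProd ω) :: cs.rightInvSeq ω := rfl
    rw [cs.wordProd_cons, map_mul, Equiv.Perm.mul_apply, ih, phi_simple, eta_apply]
    set u := cs.wordProd ω with hu
    refine Prod.ext ?_ ?_
    · show cs.simple i * (u * t * u⁻¹) * cs.simple i = cs.simple i * u * t * (cs.simple i * u)⁻¹
      rw [mul_inv_rev, cs.inv_simple]
      group
    · show ε + cnt (cs.rightInvSeq ω) t + chi (u * t * u⁻¹) (cs.simple i)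
          = ε + cnt (cs.rightInvSeq (i :: ω)) t
      rw [hris, cnt_cons]
      have : chi (u * t * u⁻¹) (cs.simple i) = chi t (u⁻¹ * cs.simple i * u) := by
        apply chi_congr
        rw [conj_eq_iff]
      rw [this]
      ring

/-- the reflection cocycle mod 2 -/
noncomputable def nu (w t : W) : ZMod 2 := (phi cs w (t, 0)).2

lemma nu_wordProd (ω : List B) (t : W) : nu cs (cs.wordProd ω) t = cnt (cs.rightInvSeq ω) t := by
  unfold nu
  rw [phi_wordProd, zero_add]

lemma phi_apply (w t : W) (ε : ZMod 2) :
    phi cs w (t, ε) = (w * t * w⁻¹, ε + nu cs w t) := by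
  obtain ⟨ω, rfl⟩ := cs.wordProd_surjective w
  rw [phi_wordProd, nu_wordProd]

lemma nu_mul (u v t : W) : nu cs (u * v) t = nu cs v t + nu cs u (v * t * v⁻¹) := by
  unfold nu
  rw [map_mul, Equiv.Perm.mul_apply, phi_apply, phi_apply, phi_apply]
  simp

lemma nu_simple (i : B) (t : W) : nu cs (cs.simple i) t = chi t (cs.simple i) := by
  unfold nu
  rw [phi_simple, eta_apply, zero_add]

lemma chi_self (t : W) : chi t t = 1 := by unfold chi; rw [if_pos rfl]

lemma zmod2_cancel {x y : ZMod 2} (h : x + y = 0) : x = y := by revert x y h; decide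

lemma nu_refl_self {t : W} (ht : cs.IsReflection t) : nu cs t t = 1 := by
  obtain ⟨v, i, rfl⟩ := ht
  have h1 : v⁻¹ * (v * cs.simple i * v⁻¹) * v⁻¹⁻¹ = cs.simple i := by group
  have h0 : nu cs (v * v⁻¹) (v * cs.simple i * v⁻¹) = 0 := by
    rw [mul_inv_cancel]
    unfold nu
    rw [map_one]
    rfl
  rw [nu_mul, h1] at h0
  have h2 : nu cs v⁻¹ (v * cs.simple i * v⁻¹) = nu cs v (cs.simple i) := zmod2_cancel h0
  rw [nu_mul, h1, h2, nu_mul, nu_simple, chi_self]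
  have h4 : cs.simple i * cs.simple i * (cs.simple i)⁻¹ = cs.simple i := by
    rw [mul_assoc, mul_inv_cancel, mul_one]
  rw [h4]
  have hx : ∀ x : ZMod 2, x + (1 + x) = 1 := by decide
  exact hx _

lemma nu_eq_one_of_isRightInversion {w t : W} (h : cs.IsRightInversion w t) : nu cs w t = 1 := by
  rcases h with ⟨hrefl, hlt⟩
  have h01 : nu cs w t = 0 ∨ nu cs w t = 1 := by
    generalize nu cs w t = x; revert x; decide
  rcases h01 with h0 | h1
  · exfalso
    have hwt : nu cs (w * t) t = 1 := by
      rw [nu_mul, nu_refl_self cs hrefl]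
      have : t * t * t⁻¹ = t := by rw [mul_assoc, mul_inv_cancel, mul_one]
      rw [this, h0, add_zero]
    obtain ⟨ω, hlen, hω⟩ := cs.exists_reduced_word (w * t)
    rw [hω, nu_wordProd] at hwt
    have hmem : t ∈ cs.rightInvSeq ω := mem_of_cnt_eq_one hwt
    have hred : cs.IsReduced ω := hlen
    have hinv := cs.isRightInversion_of_mem_rightInvSeq hred hmem
    rw [← hω] at hinv
    have : cs.length (w * t * t) < cs.length (w * t) := hinv.2
    rw [mul_assoc, hrefl.mul_self, mul_one] at this
    omega
  · exact h1

lemma exchange_right {ω : List B} {t : W} (h : cs.IsRightInversion (cs.wordProd ω) t) :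
    ∃ k < ω.length, cs.wordProd ω * t = cs.wordProd (ω.eraseIdx k) := by
  have h1 : nu cs (cs.wordProd ω) t = 1 := nu_eq_one_of_isRightInversion cs h
  rw [nu_wordProd] at h1
  have hmem : t ∈ cs.rightInvSeq ω := mem_of_cnt_eq_one h1
  obtain ⟨k, hk, hkt⟩ := List.mem_iff_getElem.mp hmem
  rw [cs.length_rightInvSeq] at hk
  refine ⟨k, hk, ?_⟩
  have h5 := cs.wordProd_mul_getD_rightInvSeq ω k
  rw [List.getD_eq_getElem _ _ (by rw [cs.length_rightInvSeq]; exact hk), hkt] at h5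
  exact h5


section Parabolic

variable {cs}

lemma simple_mem_parabolic {J : Set B} {j : B} (hj : j ∈ J) :
    cs.simple j ∈ parabolic cs J :=
  Subgroup.subset_closure ⟨j, hj, rfl⟩

lemma wordProd_mem_parabolic {J : Set B} {ω : List B} (h : ∀ b ∈ ω, b ∈ J) :
    cs.wordProd ω ∈ parabolic cs J := by
  induction ω with
  | nil => rw [cs.wordProd_nil]; exact one_mem _
  | cons i ω ih =>
    rw [cs.wordProd_cons]
    exact mul_mem (simple_mem_parabolic (h i List.mem_cons_self))
      (ih (fun b hb => h b (List.mem_cons_of_mem i hb)))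

lemma exists_J_word {J : Set B} {p : W} (hp : p ∈ parabolic cs J) :
    ∃ ω : List B, (∀ b ∈ ω, b ∈ J) ∧ cs.wordProd ω = p := by
  refine Subgroup.closure_induction ?_ ?_ ?_ ?_ hp
  · rintro x ⟨j, hj, rfl⟩
    exact ⟨[j], by simpa using hj, by simp [cs.wordProd_cons]⟩
  · exact ⟨[], by simp, cs.wordProd_nil⟩
  · rintro x y _ _ ⟨ω₁, h₁, rfl⟩ ⟨ω₂, h₂, rfl⟩
    exact ⟨ω₁ ++ ω₂, by
      intro b hb
      rcases List.mem_append.mp hb with h | h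
      exacts [h₁ b h, h₂ b h], cs.wordProd_append ω₁ ω₂⟩
  · rintro x _ ⟨ω, h₁, rfl⟩
    exact ⟨ω.reverse, fun b hb => h₁ b (List.mem_reverse.mp hb), cs.wordProd_reverse ω⟩

lemma exists_reduced_subword : ∀ n (ω : List B), ω.length ≤ n →
    ∃ ω' : List B, (∀ b ∈ ω', b ∈ ω) ∧ cs.IsReduced ω' ∧ cs.wordProd ω' = cs.wordProd ω := by
  intro n
  induction n with
  | zero =>
    intro ω hω
    rw [Nat.le_zero, List.length_eq_zero_iff] at hω
    subst hω
    exact ⟨[], by simp, by simp [CoxeterSystem.IsReduced], rfl⟩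
  | succ n ih =>
    intro ω hω
    by_cases hred : cs.IsReduced ω
    · exact ⟨ω, fun _ h => h, hred, rfl⟩
    classical
    have hne : ω ≠ [] := by
      rintro rfl
      exact hred (by simp [CoxeterSystem.IsReduced])
    have hpos : 0 < ω.length := List.length_pos_iff.mpr hne
    have hex : ∃ k, ¬ cs.IsReduced (ω.take (k+1)) := by
      refine ⟨ω.length - 1, ?_⟩
      rw [show ω.length - 1 + 1 = ω.length by omega, List.take_length]
      exact hred
    let k := Nat.find hex
    have hk : ¬ cs.IsReduced (ω.take (k+1)) := Nat.find_spec hex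
    have hkle : k ≤ ω.length - 1 := Nat.find_min' hex (by
      rw [show ω.length - 1 + 1 = ω.length by omega, List.take_length]
      exact hred)
    have hklt : k < ω.length := by omega
    have htake : cs.IsReduced (ω.take k) := by
      rcases Nat.eq_zero_or_pos k with hk0 | hk0
      · rw [hk0]
        simp [CoxeterSystem.IsReduced]
      · have h2 := Nat.find_min hex (show k - 1 < k by omega)
        rw [not_not, show k - 1 + 1 = k by omega] at h2
        exact h2
    have hlenu : cs.length (cs.wordProd (ω.take k)) = k := by
      have h3 := htake
      rw [CoxeterSystem.IsReduced] at h3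
      rw [h3, List.length_take, Nat.min_eq_left (le_of_lt hklt)]
    have htk1 : ω.take (k+1) = ω.take k ++ [ω[k]] := (List.take_concat_get' ω k hklt).symm
    have hprod : cs.wordProd (ω.take (k+1)) = cs.wordProd (ω.take k) * cs.simple ω[k] := by
      rw [htk1, cs.wordProd_append]
      simp [cs.wordProd_cons]
    have hlen1 : (ω.take (k+1)).length = k+1 := by rw [List.length_take]; omega
    have hne1 : cs.length (cs.wordProd (ω.take k) * cs.simple ω[k]) ≠ k + 1 := by
      intro hc
      apply hk
      rw [CoxeterSystem.IsReduced, hprod, hc, hlen1]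
    have hdesc : cs.length (cs.wordProd (ω.take k) * cs.simple ω[k]) + 1 = k := by
      rcases cs.length_mul_simple (cs.wordProd (ω.take k)) ω[k] with h | h <;>
        rw [hlenu] at h
      · omega
      · rcases Nat.eq_zero_or_pos k with hk0 | hk0
        · exfalso
          apply hne1
          have hu1 : cs.wordProd (ω.take k) = 1 := by
            rw [hk0, List.take_zero, cs.wordProd_nil]
          rw [hu1, one_mul, cs.length_simple, hk0]
        · omega
    have hrd : cs.IsRightInversion (cs.wordProd (ω.take k)) (cs.simple ω[k]) :=
      ⟨cs.isReflection_simple _, by omega⟩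
    obtain ⟨m, hm, hme⟩ := exchange_right cs hrd
    have hmk : m < k := by
      rw [List.length_take] at hm
      omega
    set ω'' := ((ω.take k).eraseIdx m) ++ ω.drop (k+1) with hω''
    have hprod2 : cs.wordProd ω'' = cs.wordProd ω := by
      rw [hω'', cs.wordProd_append, ← hme, ← hprod, ← cs.wordProd_append,
        List.take_append_drop]
    have hlerase : ((ω.take k).eraseIdx m).length + 1 = k := by
      rw [List.length_eraseIdx_add_one (by rw [List.length_take]; omega), List.length_take]
      omega
    have hlen2 : ω''.length ≤ n := by
      rw [hω'', List.length_append, List.length_drop]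
      omega
    obtain ⟨ω', hsub, hred', hprod'⟩ := ih ω'' hlen2
    refine ⟨ω', ?_, hred', by rw [hprod', hprod2]⟩
    intro b hb
    rcases List.mem_append.mp (hsub b hb) with h | h
    · exact (ω.take_sublist k).subset ((List.eraseIdx_sublist _ m).subset h)
    · exact (ω.drop_sublist (k+1)).subset h

lemma exists_reduced_J_word {J : Set B} {p : W} (hp : p ∈ parabolic cs J) :
    ∃ ω : List B, (∀ b ∈ ω, b ∈ J) ∧ cs.IsReduced ω ∧ cs.wordProd ω = p := by
  obtain ⟨ω, hJ, hπ⟩ := exists_J_word hp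
  obtain ⟨ω', hsub, hred, hπ'⟩ := exists_reduced_subword (cs := cs) ω.length ω le_rfl
  exact ⟨ω', fun b hb => hJ b (hsub b hb), hred, by rw [hπ', hπ]⟩

lemma min_of_isMinRep {J : Set B} {w u : W} (hu : IsMinRep cs J w u) :
    ∀ p ∈ parabolic cs J, cs.length u ≤ cs.length (p * u) := by
  intro p hp
  rcases hu with ⟨⟨p₀, hp₀, hu0⟩, hmin⟩
  exact hmin _ ⟨p * p₀, mul_mem hp hp₀, by rw [hu0, mul_assoc]⟩

lemma length_parabolic_mul {J : Set B} {u : W}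
    (hu : ∀ p ∈ parabolic cs J, cs.length u ≤ cs.length (p * u)) :
    ∀ p ∈ parabolic cs J, cs.length (p * u) = cs.length p + cs.length u := by
  suffices H : ∀ n p, p ∈ parabolic cs J → cs.length p = n →
      cs.length (p * u) = cs.length p + cs.length u by
    intro p hp
    exact H (cs.length p) p hp rfl
  intro n
  induction n using Nat.strong_induction_on with
  | _ n ih =>
  intro p hp hlen
  rcases Nat.eq_zero_or_pos n with rfl | hnpos
  · have hp1 : p = 1 := cs.length_eq_zero_iff.mp hlen
    rw [hp1, one_mul, cs.length_one, zero_add]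
  obtain ⟨ω, hJ, hred, hπ⟩ := exists_reduced_J_word hp
  rcases ω with _ | ⟨j, ωq⟩
  · exfalso
    rw [cs.wordProd_nil] at hπ
    rw [← hπ, cs.length_one] at hlen
    omega
  have hj : j ∈ J := hJ j List.mem_cons_self
  set q := cs.wordProd ωq with hq0
  have hpq : p = cs.simple j * q := by rw [← hπ, cs.wordProd_cons]
  have hlp : cs.length p = ωq.length + 1 := by
    rw [← hπ]
    rw [CoxeterSystem.IsReduced] at hred
    rw [hred]
    simp
  have h1 : cs.length q ≤ ωq.length := cs.length_wordProd_le ωq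
  have h2 : cs.length p ≤ 1 + cs.length q := by
    rw [hpq]
    calc cs.length (cs.simple j * q) ≤ cs.length (cs.simple j) + cs.length q :=
      cs.length_mul_le _ _
    _ = 1 + cs.length q := by rw [cs.length_simple]
  have hlq1 : cs.length q = ωq.length := by omega
  have hqP : q ∈ parabolic cs J :=
    wordProd_mem_parabolic (fun b hb => hJ b (List.mem_cons_of_mem j hb))
  have hih : cs.length (q * u) = cs.length q + cs.length u := ih (cs.length q) (by omega) q hqP rfl
  rcases cs.length_simple_mul (q * u) j with hcase | hcase
  · have h7 : cs.length (p * u) = cs.length (q * u) + 1 := by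
      rw [hpq, mul_assoc, hcase]
    omega
  · exfalso
    have hxne := cs.length_simple_mul_ne (q * u) j
    have hx1 : cs.length (cs.simple j * (q * u)) + 1 = cs.length (q * u) := by omega
    obtain ⟨ωu, hlenu, hωu⟩ := cs.exists_reduced_word u
    rw [CoxeterSystem.IsReduced, ← hωu] at hlenu
    set ρ := ωu.reverse ++ ωq.reverse with hρ
    have hπρ : cs.wordProd ρ = (q * u)⁻¹ := by
      rw [hρ, cs.wordProd_append, cs.wordProd_reverse, cs.wordProd_reverse, ← hωu,
        mul_inv_rev]
    have hinvdesc : cs.IsRightInversion (cs.wordProd ρ) (cs.simple j) := by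
      refine ⟨cs.isReflection_simple _, ?_⟩
      rw [hπρ]
      have he : (cs.simple j * (q * u))⁻¹ = (q * u)⁻¹ * cs.simple j := by
        rw [mul_inv_rev, cs.inv_simple]
      rw [← he, cs.length_inv, cs.length_inv]
      omega
    obtain ⟨m, hmlt, hme⟩ := exchange_right cs hinvdesc
    rw [hπρ] at hme
    rw [hρ] at hmlt
    rw [List.length_append, List.length_reverse, List.length_reverse] at hmlt
    by_cases hcase2 : m < ωu.reverse.length
    · rw [hρ, List.eraseIdx_append_of_lt_length hcase2, cs.wordProd_append,
        cs.wordProd_reverse] at hme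
      -- hme : (q * u)⁻¹ * s j = π (ωu.reverse.eraseIdx m) * q⁻¹
      have hv : cs.wordProd (ωu.reverse.eraseIdx m) = (q * u)⁻¹ * cs.simple j * q := by
        rw [hme, ← hq0]; group
      have hcP : q⁻¹ * cs.simple j * q ∈ parabolic cs J :=
        mul_mem (mul_mem (inv_mem hqP) (simple_mem_parabolic hj)) hqP
      have hcu : (q⁻¹ * cs.simple j * q) * u = (cs.wordProd (ωu.reverse.eraseIdx m))⁻¹ := by
        rw [hv, show ((q * u)⁻¹ * cs.simple j * q)⁻¹ = q⁻¹ * (cs.simple j)⁻¹ * (q * u) from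
          by group, cs.inv_simple]
        group
      have hlee : ((ωu.reverse.eraseIdx m)).length + 1 = ωu.length := by
        rw [List.length_eraseIdx_add_one hcase2, List.length_reverse]
      have hlt2 : cs.length ((q⁻¹ * cs.simple j * q) * u) < cs.length u := by
        rw [hcu, cs.length_inv]
        have := cs.length_wordProd_le (ωu.reverse.eraseIdx m)
        rw [List.length_reverse] at hcase2
        omega
      exact absurd (hu _ hcP) (by omega)
    · push_neg at hcase2
      rw [hρ, List.eraseIdx_append_of_length_le hcase2, cs.wordProd_append,
        cs.wordProd_reverse, ← hωu] at hme
      -- hme : (q * u)⁻¹ * s j = u⁻¹ * π (ωq.reverse.eraseIdx (m - _))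
      have hv2 : cs.wordProd (ωq.reverse.eraseIdx (m - ωu.reverse.length))
          = q⁻¹ * cs.simple j := by
        have h6 : u * ((q * u)⁻¹ * cs.simple j) = q⁻¹ * cs.simple j := by
          rw [mul_inv_rev]; group
        rw [← h6, hme]; group
      have hvp : (cs.wordProd (ωq.reverse.eraseIdx (m - ωu.reverse.length)))⁻¹ = p := by
        rw [hv2, show (q⁻¹ * cs.simple j)⁻¹ = (cs.simple j)⁻¹ * q from by group,
          cs.inv_simple, ← hpq]
      have hlee2 : (ωq.reverse.eraseIdx (m - ωu.reverse.length)).length + 1 = ωq.length := by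
        rw [List.length_eraseIdx_add_one (by
          rw [List.length_reverse] at hcase2 ⊢
          rw [List.length_reverse]
          omega), List.length_reverse]
      have : cs.length p ≤ ωq.length - 1 := by
        rw [← hvp, cs.length_inv]
        have := cs.length_wordProd_le (ωq.reverse.eraseIdx (m - ωu.reverse.length))
        omega
      omega

end Parabolic

section MainLemmas

variable {cs}

lemma minRep_unique {J : Set B} {w u v : W} (hu : IsMinRep cs J w u)
    (hv : IsMinRep cs J w v) : u = v := by
  have hmin := min_of_isMinRep hu
  obtain ⟨⟨p₁, hp₁, hu1⟩, humin⟩ := hu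
  obtain ⟨⟨p₂, hp₂, hv1⟩, hvmin⟩ := hv
  have hvu : v = (p₂ * p₁⁻¹) * u := by rw [hv1, hu1]; group
  have hP : p₂ * p₁⁻¹ ∈ parabolic cs J := mul_mem hp₂ (inv_mem hp₁)
  have hadd := length_parabolic_mul hmin _ hP
  rw [← hvu] at hadd
  have h1 : cs.length v ≤ cs.length u := hvmin u ⟨p₁, hp₁, hu1⟩
  have h2 : cs.length u ≤ cs.length v := humin v ⟨p₂, hp₂, hv1⟩
  have h0 : cs.length (p₂ * p₁⁻¹) = 0 := by omega
  have h3 : p₂ * p₁⁻¹ = 1 := cs.length_eq_zero_iff.mp h0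
  rw [hvu, h3, one_mul]

lemma minRep_exists (J : Set B) (w : W) : ∃ u, IsMinRep cs J w u := by
  classical
  have hne : {n : ℕ | ∃ p ∈ parabolic cs J, cs.length (p * w) = n}.Nonempty :=
    ⟨cs.length w, 1, one_mem _, by rw [one_mul]⟩
  obtain ⟨p, hp, hpl⟩ := Nat.sInf_mem hne
  refine ⟨p * w, ⟨p, hp, rfl⟩, ?_⟩
  rintro v ⟨p', hp', rfl⟩
  rw [hpl]
  exact Nat.sInf_le ⟨p', hp', rfl⟩

lemma rweakLE_trans {x y z : W} (h1 : rweakLE cs x y) (h2 : rweakLE cs y z) :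
    rweakLE cs x z := by
  unfold rweakLE at *
  have ha : cs.length (x⁻¹ * z) ≤ cs.length (x⁻¹ * y) + cs.length (y⁻¹ * z) := by
    have h := cs.length_mul_le (x⁻¹ * y) (y⁻¹ * z)
    rw [show x⁻¹ * y * (y⁻¹ * z) = x⁻¹ * z from by group] at h
    exact h
  have hb : cs.length z ≤ cs.length x + cs.length (x⁻¹ * z) := by
    have h := cs.length_mul_le x (x⁻¹ * z)
    rw [show x * (x⁻¹ * z) = z from by group] at h
    exact h
  omega

set_option maxHeartbeats 1000000 in
lemma minRep_step {J : Set B} {y y' z' : W} {i : B} (hy : IsMinRep cs J y y')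
    (hz : IsMinRep cs J (y * cs.simple i) z')
    (hlen : cs.length (y * cs.simple i) = cs.length y + 1) : rweakLE cs y' z' := by
  have hymin := min_of_isMinRep hy
  have hAy := length_parabolic_mul hymin
  obtain ⟨p₀, hp₀, hy0⟩ := hy.1
  obtain ⟨p₁, hp₁, hz0⟩ := hz.1
  have hy'dich := cs.length_mul_simple y' i
  have hys : cs.length (y' * cs.simple i) = cs.length y' + 1 := by
    rcases hy'dich with h | h
    · exact h
    · exfalso
      have h1 : y * cs.simple i = p₀⁻¹ * (y' * cs.simple i) := by rw [hy0]; group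
      have h2 : cs.length (y * cs.simple i) ≤
          cs.length p₀⁻¹ + cs.length (y' * cs.simple i) := by
        rw [h1]; exact cs.length_mul_le _ _
      have h3 : cs.length y = cs.length p₀⁻¹ + cs.length y' := by
        have h4 := hAy p₀⁻¹ (inv_mem hp₀)
        rw [show p₀⁻¹ * y' = y from by rw [hy0]; group] at h4
        exact h4
      have hne := cs.length_mul_simple_ne y' i
      omega
  have hy'sc : ∃ p ∈ parabolic cs J, y' * cs.simple i = p * (y * cs.simple i) :=
    ⟨p₀, hp₀, by rw [hy0]; group⟩
  have hz'le : cs.length z' ≤ cs.length y' + 1 := by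
    have h := hz.2 _ hy'sc
    omega
  have hz's2 : z' * cs.simple i = p₁ * y := by
    calc z' * cs.simple i = p₁ * (y * cs.simple i) * cs.simple i := by rw [hz0]
      _ = p₁ * (y * (cs.simple i * cs.simple i)) := by group
      _ = p₁ * y := by rw [cs.simple_mul_simple_self, mul_one]
  have hz'sc : ∃ p ∈ parabolic cs J, z' * cs.simple i = p * y := ⟨p₁, hp₁, hz's2⟩
  have hy'le : cs.length y' ≤ cs.length (z' * cs.simple i) := hy.2 _ hz'sc
  have hz'dich := cs.length_mul_simple z' i
  have hz'ne := cs.length_mul_simple_ne z' i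
  by_cases hcl : cs.length z' = cs.length y' + 1
  · have hmr : IsMinRep cs J (y * cs.simple i) (y' * cs.simple i) := by
      refine ⟨hy'sc, ?_⟩
      intro v hv
      have h := hz.2 v hv
      omega
    have heq : z' = y' * cs.simple i :=
      minRep_unique (cs := cs) (J := J) (w := y * cs.simple i) hz hmr
    show cs.length y' + cs.length (y'⁻¹ * z') = cs.length z'
    rw [heq, show y'⁻¹ * (y' * cs.simple i) = cs.simple i from by group, cs.length_simple,
      hys]
  · have hz'le2 : cs.length z' ≤ cs.length y' := by omega
    have hz's : cs.length (z' * cs.simple i) = cs.length z' + 1 := by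
      rcases hz'dich with h | h
      · exact h
      · omega
    by_cases hceq : cs.length z' = cs.length y'
    · have hr : z' * cs.simple i = (p₁ * p₀⁻¹) * y' := by
        rw [hz's2, show y = p₀⁻¹ * y' from by rw [hy0]; group]
        group
      have hrP : p₁ * p₀⁻¹ ∈ parabolic cs J := mul_mem hp₁ (inv_mem hp₀)
      have hradd := hAy _ hrP
      rw [← hr] at hradd
      have hr1 : cs.length (p₁ * p₀⁻¹) = 1 := by omega
      obtain ⟨mB, hmB⟩ := cs.length_eq_one_iff.mp hr1
      obtain ⟨ωy, hωylen, hωy⟩ := cs.exists_reduced_word y'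
      rw [CoxeterSystem.IsReduced, ← hωy] at hωylen
      have hsm : cs.simple mB * y' = z' * cs.simple i := by rw [hr, hmB]
      have hword : cs.wordProd (mB :: ωy) = cs.simple mB * y' := by
        rw [cs.wordProd_cons, ← hωy]
      have h9 : z' * cs.simple i * cs.simple i = z' := by
        rw [mul_assoc, cs.simple_mul_simple_self, mul_one]
      have hdesc : cs.IsRightInversion (cs.wordProd (mB :: ωy)) (cs.simple i) := by
        refine ⟨cs.isReflection_simple _, ?_⟩
        rw [hword, hsm, h9, hz's]
        omega
      obtain ⟨k, hklt, hke⟩ := exchange_right cs hdesc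
      rw [hword, hsm, h9] at hke
      rcases k with _ | k'
      · have h10 : cs.wordProd ((mB :: ωy).eraseIdx 0) = y' := by
          rw [show (mB :: ωy).eraseIdx 0 = ωy from rfl, ← hωy]
        show cs.length y' + cs.length (y'⁻¹ * z') = cs.length z'
        rw [hke, h10, inv_mul_cancel, cs.length_one, add_zero]
      · exfalso
        rw [show (mB :: ωy).eraseIdx (k'+1) = mB :: (ωy.eraseIdx k') from rfl,
          cs.wordProd_cons] at hke
        have h10 : cs.wordProd (ωy.eraseIdx k') = cs.simple mB * z' := by
          rw [hke, ← mul_assoc, cs.simple_mul_simple_self, one_mul]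
        have h11 : cs.simple mB * z' = y' * cs.simple i := by
          have hz'e : z' = cs.simple mB * y' * cs.simple i := by
            calc z' = z' * (cs.simple i * cs.simple i) := by
                  rw [cs.simple_mul_simple_self, mul_one]
              _ = (z' * cs.simple i) * cs.simple i := by group
              _ = cs.simple mB * y' * cs.simple i := by rw [← hsm]
          rw [hz'e, ← mul_assoc, ← mul_assoc, cs.simple_mul_simple_self, one_mul]
        rw [h11] at h10
        have h12 := cs.length_wordProd_le (ωy.eraseIdx k')
        rw [h10] at h12
        have hk'lt : k' < ωy.length := by
          rw [List.length_cons] at hklt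
          omega
        have h13 : (ωy.eraseIdx k').length + 1 = ωy.length :=
          List.length_eraseIdx_add_one hk'lt
        omega
    · -- ℓ z' < ℓ y'
      exfalso
      have hlt : cs.length z' < cs.length y' := by omega
      have heq2 : cs.length (z' * cs.simple i) = cs.length y' := by omega
      have hmr2 : IsMinRep cs J y (z' * cs.simple i) := by
        refine ⟨hz'sc, ?_⟩
        intro v hv
        rw [heq2]
        exact hy.2 v hv
      have he : z' * cs.simple i = y' := minRep_unique (cs := cs) (J := J) (w := y) hmr2 hy
      have hz'e : z' = y' * cs.simple i := by
        calc z' = (z' * cs.simple i) * cs.simple i := by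
              rw [mul_assoc, cs.simple_mul_simple_self, mul_one]
          _ = y' * cs.simple i := by rw [he]
      have : cs.length z' = cs.length y' + 1 := by rw [hz'e, hys]
      omega

set_option maxHeartbeats 4000000 in
lemma minRep_chain {J : Set B} : ∀ ω : List B, ∀ y y' z'' : W, IsMinRep cs J y y' →
    IsMinRep cs J (y * cs.wordProd ω) z'' →
    cs.length y + ω.length = cs.length (y * cs.wordProd ω) → rweakLE cs y' z'' := by
  intro ω
  induction ω with
  | nil =>
    intro y y' z'' hy1 hz1 _
    rw [cs.wordProd_nil, mul_one] at hz1
    have heq : y' = z'' := minRep_unique (cs := cs) (J := J) (w := y) hy1 hz1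
    show cs.length y' + cs.length (y'⁻¹ * z'') = cs.length z''
    rw [← heq, inv_mul_cancel, cs.length_one, add_zero]
  | cons i ω ih =>
    intro y y' z'' hy1 hz1 hl
    have hassoc : y * cs.wordProd (i :: ω) = (y * cs.simple i) * cs.wordProd ω := by
      rw [cs.wordProd_cons]; group
    rw [hassoc] at hz1 hl
    have hstep1 : cs.length (y * cs.simple i) = cs.length y + 1 := by
      have h1 : cs.length (y * cs.simple i) ≤ cs.length y + 1 := by
        have h := cs.length_mul_le y (cs.simple i)
        rw [cs.length_simple] at h
        exact h
      have h2 : cs.length ((y * cs.simple i) * cs.wordProd ω) ≤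
          cs.length (y * cs.simple i) + ω.length := by
        have ha := cs.length_mul_le (y * cs.simple i) (cs.wordProd ω)
        have hb := cs.length_wordProd_le ω
        omega
      rw [List.length_cons] at hl
      omega
    obtain ⟨y₁', hy₁'⟩ := minRep_exists (cs := cs) J (y * cs.simple i)
    have hs : rweakLE cs y' y₁' :=
      minRep_step (cs := cs) (J := J) (i := i) hy1 hy₁' hstep1
    have harith : cs.length (y * cs.simple i) + ω.length
        = cs.length ((y * cs.simple i) * cs.wordProd ω) := by
      rw [List.length_cons] at hl
      omega
    have hrest : rweakLE cs y₁' z'' := ih (y * cs.simple i) y₁' z'' hy₁' hz1 harith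
    exact rweakLE_trans hs hrest

end MainLemmas

/-- taking minimal-length coset representatives is order-preserving for
the right weak order: if `y ≤_R z` then `ᴶy ≤_R ᴶz`. -/
theorem minRep_monotone (J : Set B) (y z y' z' : W)
    (hy : IsMinRep cs J y y') (hz : IsMinRep cs J z z')
    (hyz : rweakLE cs y z) : rweakLE cs y' z' := by
  obtain ⟨ω, hωlen, hωeq⟩ := cs.exists_reduced_word (y⁻¹ * z)
  have hz2 : z = y * cs.wordProd ω := by rw [← hωeq]; group
  have hyz2 : cs.length y + ω.length = cs.length (y * cs.wordProd ω) := by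
    rw [← hz2, ← (hωlen : cs.length (cs.wordProd ω) = ω.length), ← hωeq]
    exact hyz
  have hz3 : IsMinRep cs J (y * cs.wordProd ω) z' := by rw [← hz2]; exact hz
  exact minRep_chain (cs := cs) (J := J) ω y y' z' hy hz3 hyz2

end CoxPop
end

section
/- A permutation w ∈ S_n is 2-pop-stack-sortable (i.e., Pop²(w) = e) if and only if for every pair of consecutive descending runs δ_j, δ_{j+1} of w (read left to right), the largest entry of δ_j is at most 1 more than the smallest entry of δ_{j+1}. -/
namespace PopList

/-- Decompose a one-line notation into its maximal descending runs. -/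
def runs : List ℕ → List (List ℕ)
  | [] => []
  | a :: l =>
    match runs l with
    | [] => [[a]]
    | r :: rs => if r.head! < a then (a :: r) :: rs else [a] :: r :: rs

/-- The pop-stack-sorting map on one-line notations: reverse every maximal
descending run. -/
def popL (l : List ℕ) : List ℕ := ((runs l).map List.reverse).flatten

/-! ### Auxiliary lemmas -/

lemma head?_eq_some' {l : List ℕ} (h : l ≠ []) : l.head? = some l.head! :=
  Option.mem_def.1 (List.head!_mem_head? h)

lemma getLast?_eq_some' {l : List ℕ} (h : l ≠ []) : l.getLast? = some l.getLast! := by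
  have h1 := List.getLast?_eq_getLast h
  rw [h1, List.getLast!_of_getLast? h1]

lemma getLast!_cons' {a : ℕ} {r : List ℕ} (h : r ≠ []) : (a :: r).getLast! = r.getLast! := by
  apply List.getLast!_of_getLast?
  cases r with
  | nil => exact absurd rfl h
  | cons b t => rw [List.getLast?_cons_cons]; exact getLast?_eq_some' h

lemma rev_head! {r : List ℕ} (h : r ≠ []) : r.reverse.head! = r.getLast! :=
  List.head!_of_head? (by rw [List.head?_reverse, getLast?_eq_some' h])

lemma rev_getLast! {r : List ℕ} (h : r ≠ []) : r.reverse.getLast! = r.head! :=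
  List.getLast!_of_getLast? (by rw [List.getLast?_reverse, head?_eq_some' h])

lemma chain'_and {α : Type*} {R S : α → α → Prop} {l : List α}
    (h1 : l.IsChain R) (h2 : l.IsChain S) : l.IsChain (fun a b => R a b ∧ S a b) := by
  induction l with
  | nil => simp
  | cons a t ih =>
    cases t with
    | nil => simp
    | cons b t' =>
      rw [List.isChain_cons_cons] at h1 h2 ⊢
      exact ⟨⟨h1.1, h2.1⟩, ih h1.2 h2.2⟩

lemma chain'_imp_mem {α : Type*} {R S : α → α → Prop} {l : List α}
    (h : l.IsChain R) (hs : ∀ a ∈ l, ∀ b ∈ l, R a b → S a b) : l.IsChain S := by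
  induction l with
  | nil => simp
  | cons a t ih =>
    cases t with
    | nil => simp
    | cons b t' =>
      rw [List.isChain_cons_cons] at h ⊢
      refine ⟨hs a (by simp) b (by simp) h.1, ih h.2 ?_⟩
      exact fun x hx y hy => hs x (List.mem_cons_of_mem _ hx) y (List.mem_cons_of_mem _ hy)

lemma runs_ne_nil (l : List ℕ) : [] ∉ runs l := by
  induction l with
  | nil => simp [runs]
  | cons a t ih =>
    cases h : runs t with
    | nil => simp [runs, h]
    | cons r rs =>
      rw [h] at ih
      simp only [runs, h]
      split_ifs <;> simp_all

lemma runs_join (l : List ℕ) : (runs l).flatten = l := by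
  induction l with
  | nil => simp [runs]
  | cons a t ih =>
    cases h : runs t with
    | nil =>
      rw [h] at ih; simp at ih
      simp [runs, h, ← ih]
    | cons r rs =>
      rw [h] at ih
      simp only [runs, h]
      split_ifs <;> simp_all

lemma runs_chain (l : List ℕ) : ∀ r ∈ runs l, r.IsChain (· > ·) := by
  induction l with
  | nil => simp [runs]
  | cons a t ih =>
    cases h : runs t with
    | nil => simp [runs, h]
    | cons r rs =>
      rw [h] at ih
      have hr : r ≠ [] := by
        intro e; exact runs_ne_nil t (by rw [h, e]; exact List.mem_cons_self)
      simp only [runs, h]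
      split_ifs with hlt
      · intro s hs
        rcases List.mem_cons.1 hs with rfl | hs'
        · refine List.isChain_cons.2 ⟨?_, ih r (List.mem_cons_self)⟩
          intro y hy
          rw [head?_eq_some' hr] at hy
          simp only [Option.mem_def, Option.some.injEq] at hy
          subst hy; exact hlt
        · exact ih s (List.mem_cons_of_mem _ hs')
      · intro s hs
        rcases List.mem_cons.1 hs with rfl | hs'
        · simp
        · exact ih s hs'

lemma runs_bd (l : List ℕ) : (runs l).IsChain (fun r r' => r.getLast! ≤ r'.head!) := by
  induction l with
  | nil => simp [runs]
  | cons a t ih =>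
    cases h : runs t with
    | nil => simp [runs, h]
    | cons r rs =>
      rw [h] at ih
      have hr : r ≠ [] := by
        intro e; exact runs_ne_nil t (by rw [h, e]; exact List.mem_cons_self)
      simp only [runs, h]
      split_ifs with hlt
      · cases rs with
        | nil => simp
        | cons r2 rs2 =>
          rw [List.isChain_cons_cons] at ih ⊢
          exact ⟨by rw [getLast!_cons' hr]; exact ih.1, ih.2⟩
      · rw [List.isChain_cons_cons]
        refine ⟨?_, ih⟩
        have : a ≤ r.head! := not_lt.1 hlt
        simpa using this

lemma mem_runs_ne_nil {l : List ℕ} {r : List ℕ} (hr : r ∈ runs l) : r ≠ [] :=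
  fun e => runs_ne_nil l (e ▸ hr)

lemma chain'_join' {R : ℕ → ℕ → Prop} {L : List (List ℕ)} (h : [] ∉ L) :
    L.flatten.IsChain R ↔
      (∀ r ∈ L, r.IsChain R) ∧ L.IsChain (fun r r' => R r.getLast! r'.head!) := by
  rw [List.isChain_flatten h]
  constructor
  · rintro ⟨h1, h2⟩
    refine ⟨h1, chain'_imp_mem h2 ?_⟩
    intro r hr r' hr' hx
    exact hx _ (by rw [getLast?_eq_some' (fun e => h (e ▸ hr))]; rfl)
      _ (by rw [head?_eq_some' (fun e => h (e ▸ hr'))]; rfl)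
  · rintro ⟨h1, h2⟩
    refine ⟨h1, chain'_imp_mem h2 ?_⟩
    intro r hr r' hr' hx y hy z hz
    rw [getLast?_eq_some' (fun e => h (e ▸ hr))] at hy
    rw [head?_eq_some' (fun e => h (e ▸ hr'))] at hz
    simp only [Option.mem_def, Option.some.injEq] at hy hz
    subst hy; subst hz; exact hx

lemma consec_mem {r : List ℕ} (h : r.IsChain (fun a b => a = b + 1)) (hne : r ≠ []) :
    r.getLast! ≤ r.head! ∧ ∀ x, r.getLast! ≤ x → x ≤ r.head! → x ∈ r := by
  induction r with
  | nil => exact absurd rfl hne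
  | cons a t ih =>
    cases t with
    | nil =>
      constructor
      · simp [List.getLast!_cons_eq_getLastD, List.getLastD]
      · intro x h1 h2
        simp only [List.getLast!_cons_eq_getLastD, List.getLastD, List.head!_cons] at h1 h2
        have : x = a := le_antisymm h2 h1
        simp [this]
    | cons b t' =>
      rw [List.isChain_cons_cons] at h
      obtain ⟨hab, h2⟩ := h
      obtain ⟨hle, hmem⟩ := ih h2 (by simp)
      rw [getLast!_cons' (by simp), List.head!_cons]
      rw [List.head!_cons] at hle
      constructor
      · omega
      · intro x h1 h2x
        rcases Nat.lt_or_ge x (b + 1) with hx | hx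
        · exact List.mem_cons_of_mem _ (hmem x h1 (by rw [List.head!_cons]; omega))
        · have : x = a := by omega
          simp [this]

lemma chain'_range (n : ℕ) : (List.range n).IsChain (fun a b => b = a + 1) := by
  rw [List.isChain_iff_getElem]
  intro i h
  simp [List.getElem_range]

lemma rev_join_perm (L : List (List ℕ)) : (L.map List.reverse).flatten.Perm L.flatten := by
  induction L with
  | nil => simp
  | cons r rs ih => simpa using (r.reverse_perm).append ih

lemma popL_perm (l : List ℕ) : (popL l).Perm l := by
  have := rev_join_perm (runs l)
  rwa [runs_join] at this

lemma map_rev_ne_nil {l : List ℕ} : [] ∉ (runs l).map List.reverse := by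
  intro h
  obtain ⟨r, hr, he⟩ := List.mem_map.1 h
  exact mem_runs_ne_nil hr (List.reverse_eq_nil_iff.1 he)

lemma key {n : ℕ} {v : List ℕ} (hv : v.Perm (List.range n)) :
    popL v = List.range n ↔ v.IsChain (fun a b => a ≤ b + 1) := by
  constructor
  · intro h
    have hT : (popL v).IsChain (fun a b => b = a + 1) := by
      rw [h]; exact chain'_range n
    unfold popL at hT
    rw [chain'_join' map_rev_ne_nil] at hT
    have hcons : ∀ r ∈ runs v, r.IsChain (fun a b => a = b + 1) := by
      intro r hr
      have := hT.1 r.reverse (List.mem_map_of_mem hr)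
      rw [List.isChain_reverse] at this
      exact this
    conv_rhs => rw [← runs_join v]
    rw [chain'_join' (runs_ne_nil v)]
    constructor
    · intro r hr
      exact (hcons r hr).imp (fun h => by omega)
    · exact (runs_bd v).imp (fun h => by omega)
  · intro hc
    have hc' := hc
    rw [← runs_join v, chain'_join' (runs_ne_nil v)] at hc'
    have hcons : ∀ r ∈ runs v, r.IsChain (fun a b => a = b + 1) := by
      intro r hr
      exact (chain'_and (runs_chain v r hr) (hc'.1 r hr)).imp (fun h => by omega)
    have hnd : v.Nodup := hv.symm.nodup List.nodup_range
    have hdisj : List.Pairwise List.Disjoint (runs v) := by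
      rw [← runs_join v] at hnd
      exact (List.nodup_flatten.1 hnd).2
    have hlt : (runs v).IsChain (fun r r' => r.head! < r'.getLast!) := by
      refine chain'_imp_mem (chain'_and (runs_bd v) hdisj.isChain) ?_
      rintro r hr r' hr' ⟨hle, hd⟩
      by_contra hng
      push_neg at hng
      obtain ⟨hle1, hmem⟩ := consec_mem (hcons r hr) (mem_runs_ne_nil hr)
      obtain ⟨hle2, hmem'⟩ := consec_mem (hcons r' hr') (mem_runs_ne_nil hr')
      set x := max r.getLast! r'.getLast! with hx
      have hxr : x ∈ r := hmem x (le_max_left _ _) (max_le hle1 hng)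
      have hxr' : x ∈ r' := hmem' x (le_max_right _ _) (max_le hle hle2)
      exact hd hxr hxr'
    have hsorted : (popL v).IsChain (· < ·) := by
      unfold popL
      rw [chain'_join' map_rev_ne_nil]
      constructor
      · intro b hb
        obtain ⟨r, hr, rfl⟩ := List.mem_map.1 hb
        rw [List.isChain_reverse]
        exact (runs_chain v r hr).imp (fun _ _ h => h)
      · rw [List.isChain_map]
        refine chain'_imp_mem hlt ?_
        intro r hr r' hr' hx
        rwa [rev_getLast! (mem_runs_ne_nil hr), rev_head! (mem_runs_ne_nil hr')]
    refine List.Perm.eq_of_sortedLE ?_ (List.Pairwise.sortedLE List.pairwise_le_range) ((popL_perm v).trans hv)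
    exact List.Pairwise.sortedLE (List.Pairwise.imp le_of_lt (List.isChain_iff_pairwise.1 hsorted))

/-- a permutation `w ∈ Sₙ` (written in one-line notation as a list that
is a permutation of `{0, …, n-1}`) is 2-pop-stack-sortable iff for every pair of
consecutive descending runs, the largest entry of the first run is at most `1` more
than the smallest entry of the next run. -/
theorem two_pop_stack_sortable_iff (n : ℕ) (l : List ℕ) (hl : l.Perm (List.range n)) :
    popL (popL l) = List.range n ↔
      List.Chain' (fun r r' => r.head! ≤ r'.getLast! + 1) (runs l) := by
  unfold List.Chain'
  have hv : (popL l).Perm (List.range n) := (popL_perm l).trans hl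
  rw [key hv]
  show (((runs l).map List.reverse).flatten).IsChain (fun a b => a ≤ b + 1) ↔ _
  rw [chain'_join' map_rev_ne_nil]
  constructor
  · intro h
    have h2 := h.2
    rw [List.isChain_map] at h2
    refine chain'_imp_mem h2 ?_
    intro r hr r' hr' hx
    rwa [rev_getLast! (mem_runs_ne_nil hr), rev_head! (mem_runs_ne_nil hr')] at hx
  · intro h
    constructor
    · intro b hb
      obtain ⟨r, hr, rfl⟩ := List.mem_map.1 hb
      rw [List.isChain_reverse]
      exact (runs_chain l r hr).imp (fun a b hab => by omega)
    · rw [List.isChain_map]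
      refine chain'_imp_mem h ?_
      intro r hr r' hr' hx
      rwa [rev_getLast! (mem_runs_ne_nil hr), rev_head! (mem_runs_ne_nil hr')]

end PopList
end

section
/- For every affine permutation w ∈ S̃_n, every descending run of Pop(w) has length at most 3, where Pop reverses each descending run of w. -/
namespace AffinePop

/-- `w` is an affine permutation of size `n`: a bijection `ℤ → ℤ` commuting with
translation by `n` and normalized so that `∑_{i=1}^n w(i) = n(n+1)/2`. -/
def IsAffinePerm (n : ℕ) (w : ℤ → ℤ) : Prop :=
  Function.Bijective w ∧ (∀ i : ℤ, w (i + n) = w i + n) ∧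
    2 * (∑ i ∈ Finset.Icc (1 : ℤ) (n : ℤ), w i) = n * (n + 1)

/-- `a i` and `b i` are the left and right endpoints of the maximal descending run of
`w` containing position `i`: `w` is strictly decreasing on `[a i, b i]` and ascends
just outside it. -/
def IsRunBounds (w : ℤ → ℤ) (a b : ℤ → ℤ) : Prop :=
  ∀ i : ℤ, a i ≤ i ∧ i ≤ b i ∧
    (∀ j : ℤ, a i ≤ j → j < b i → w (j + 1) < w j) ∧
    w (a i - 1) < w (a i) ∧ w (b i) < w (b i + 1)

/-- `v` is obtained from `w` by reversing every maximal descending run of `w` (keeping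
entries in distinct runs in the same relative order); this is the pop-stack-sorting
map on affine permutations. -/
def PopRel (w v : ℤ → ℤ) : Prop :=
  ∃ a b : ℤ → ℤ, IsRunBounds w a b ∧ ∀ i : ℤ, v i = w (a i + b i - i)

/-- for every affine permutation `w ∈ S̃ₙ`, every descending run of
`Pop(w)` has length at most `3`, i.e. `Pop(w)` has no three consecutive descents. -/
theorem pop_affine_run_length_le_three (n : ℕ) (hn : 1 ≤ n) (w v : ℤ → ℤ)
    (hw : IsAffinePerm n w) (hv : PopRel w v) :
    ∀ i : ℤ, ¬ (v (i + 1) < v i ∧ v (i + 2) < v (i + 1) ∧ v (i + 3) < v (i + 2)) := by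
  obtain ⟨a, b, hab, hv⟩ := hv
  -- uniqueness of run bounds: any point in the run [a i, b i] has the same bounds
  have same : ∀ i j : ℤ, a i ≤ j → j ≤ b i → a j = a i ∧ b j = b i := by
    intro i j h1 h2
    obtain ⟨haj, hbj, hdecj, hLj, hRj⟩ := hab j
    obtain ⟨hai, hbi, hdeci, hLi, hRi⟩ := hab i
    have hA : a j = a i := by
      by_contra hne
      rcases lt_or_gt_of_ne hne with hlt | hgt
      · have hd := hdecj (a i - 1) (by omega) (by omega)
        have he : a i - 1 + 1 = a i := by ring
        rw [he] at hd
        linarith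
      · have hd := hdeci (a j - 1) (by omega) (by omega)
        have he : a j - 1 + 1 = a j := by ring
        rw [he] at hd
        linarith
    refine ⟨hA, ?_⟩
    by_contra hne
    rcases lt_or_gt_of_ne hne with hlt | hgt
    · have hd := hdeci (b j) (by omega) (by omega)
      linarith
    · have hd := hdecj (b i) (by omega) (by omega)
      linarith
  -- a descent of v at i forces b i = i
  have keyB : ∀ i : ℤ, v (i + 1) < v i → b i = i := by
    intro i hd
    by_contra hne
    obtain ⟨hai, hbi, hdeci, hLi, hRi⟩ := hab i
    have hlt : i + 1 ≤ b i := by omega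
    obtain ⟨heqa, heqb⟩ := same i (i + 1) (by omega) hlt
    rw [hv, hv, heqa, heqb] at hd
    have hdec := hdeci (a i + b i - (i + 1)) (by omega) (by omega)
    have he : a i + b i - (i + 1) + 1 = a i + b i - i := by ring
    rw [he] at hdec
    linarith
  -- a descent of v at i forces a (i+1) = i+1
  have keyA : ∀ i : ℤ, v (i + 1) < v i → a (i + 1) = i + 1 := by
    intro i hd
    have hb := keyB i hd
    by_contra hne
    have h1 := (hab (i + 1)).1
    have h2 := (hab (i + 1)).2.1
    obtain ⟨_, heqb⟩ := same (i + 1) i (by omega) (by omega)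
    omega
  intro i ⟨h1, h2, h3⟩
  have h2' : v (i + 1 + 1) < v (i + 1) := by
    rw [show (i + 1 + 1 : ℤ) = i + 2 by ring]; exact h2
  have h3' : v (i + 2 + 1) < v (i + 2) := by
    rw [show (i + 2 + 1 : ℤ) = i + 3 by ring]; exact h3
  have ha1 : a (i + 1) = i + 1 := keyA i h1
  have hb1 : b (i + 1) = i + 1 := keyB (i + 1) h2'
  have ha2 : a (i + 2) = i + 2 := by
    have := keyA (i + 1) h2'
    rw [show (i + 1 + 1 : ℤ) = i + 2 by ring] at this
    exact this
  have hb2 : b (i + 2) = i + 2 := keyB (i + 2) h3'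
  have hv1 : v (i + 1) = w (i + 1) := by
    rw [hv, ha1, hb1, show (i + 1 + (i + 1) - (i + 1) : ℤ) = i + 1 by ring]
  have hv2 : v (i + 2) = w (i + 2) := by
    rw [hv, ha2, hb2, show (i + 2 + (i + 2) - (i + 2) : ℤ) = i + 2 by ring]
  have hasc := (hab (i + 1)).2.2.2.2
  rw [hb1, show (i + 1 + 1 : ℤ) = i + 2 by ring] at hasc
  rw [hv1, hv2] at h2
  linarith

end AffinePop
end

section
/- Let w be a permutation in S_{2n} viewed as a subgroup element of the hyperoctahedral group B_n (i.e., w₀ w w₀ = w, where w₀ is the longest element of S_{2n}). Then Pop_{S_{2n}}(w) = Pop_{B_n}(w): the pop-stack-sorting map on S_{2n} restricted to B_n coincides with the Coxeter pop-stack-sorting operator of B_n. -/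
set_option linter.deprecated false
set_option maxHeartbeats 1000000


namespace HyperPop

/-- The number of inversions of a permutation of `Fin m` (its Coxeter length). -/
def invCount {m : ℕ} (w : Equiv.Perm (Fin m)) : ℕ :=
  (Finset.univ.filter (fun p : Fin m × Fin m => p.1 < p.2 ∧ w p.2 < w p.1)).card

/-- The right weak order on `S_m`: `x ≤_R y` iff `ℓ(x) + ℓ(x⁻¹y) = ℓ(y)`. -/
def rweak {m : ℕ} (x y : Equiv.Perm (Fin m)) : Prop :=
  invCount x + invCount (x⁻¹ * y) = invCount y

/-- The adjacent transposition `s_i` swapping positions `i` and `i+1`. -/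
def adjSwap (m i : ℕ) (h : i + 1 < m) : Equiv.Perm (Fin m) :=
  Equiv.swap ⟨i, by omega⟩ ⟨i + 1, h⟩

/-- The hyperoctahedral group `B_n` realized inside `S_{2n}`: the permutations whose
plot is invariant under 180° rotation, i.e. those fixed by `w ↦ w₀ww₀`. -/
def hyperoctahedral (n : ℕ) : Set (Equiv.Perm (Fin (2 * n))) :=
  {w | ∀ i : Fin (2 * n), w (Fin.rev i) = Fin.rev (w i)}

/-- The simple generators `sᵢᴮ` of `B_n ⊆ S_{2n}` (indices `0 ≤ i ≤ n-1`, 0-indexed):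
`sᵢᴮ = sᵢ · s_{2n-2-i}` for `i < n-1`, and `s_{n-1}ᴮ = s_{n-1}`. -/
def bGen (n i : ℕ) (hn : 1 ≤ n) (h : i < n) : Equiv.Perm (Fin (2 * n)) :=
  if hi : i + 1 < n then
    adjSwap (2 * n) i (by omega) * adjSwap (2 * n) (2 * n - 2 - i) (by omega)
  else adjSwap (2 * n) i (by omega)

/-- The set `{w · s : s a right descent of w in S_{2n}} ∪ {w}`. -/
def targetsA {m : ℕ} (w : Equiv.Perm (Fin m)) : Set (Equiv.Perm (Fin m)) :=
  insert w {v | ∃ (i : ℕ) (h : i + 1 < m),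
    w ⟨i + 1, h⟩ < w ⟨i, by omega⟩ ∧ v = w * adjSwap m i h}

/-- The set `{w · sᵢᴮ : sᵢᴮ a right descent of w in B_n} ∪ {w}`. -/
def targetsB (n : ℕ) (hn : 1 ≤ n) (w : Equiv.Perm (Fin (2 * n))) :
    Set (Equiv.Perm (Fin (2 * n))) :=
  insert w {v | ∃ (i : ℕ) (h : i < n),
    w ⟨i + 1, by omega⟩ < w ⟨i, by omega⟩ ∧ v = w * bGen n i hn h}

/-- `z` is the meet of `A` in the right weak order restricted to `C`. -/
def IsMeetOn {m : ℕ} (C : Set (Equiv.Perm (Fin m))) (A : Set (Equiv.Perm (Fin m)))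
    (z : Equiv.Perm (Fin m)) : Prop :=
  z ∈ C ∧ (∀ a ∈ A, rweak z a) ∧
    ∀ u ∈ C, (∀ a ∈ A, rweak u a) → rweak u z

lemma adjSwap_val {m i : ℕ} (h : i + 1 < m) (x : Fin m) :
    ((adjSwap m i h) x : ℕ) = if (x : ℕ) = i then i + 1 else if (x : ℕ) = i + 1 then i else x := by
  rcases x with ⟨x, hx⟩
  simp only [adjSwap, Equiv.swap_apply_def]
  split_ifs with h1 h2 h3 h4 <;> simp_all [Fin.ext_iff]

lemma adjSwap_apply_self {m i : ℕ} (h : i + 1 < m) (x : Fin m) :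
    (adjSwap m i h) ((adjSwap m i h) x) = x := Equiv.swap_apply_self _ _ _

lemma adjSwap_left {m i : ℕ} (h : i + 1 < m) :
    (adjSwap m i h) ⟨i, by omega⟩ = ⟨i + 1, h⟩ := Equiv.swap_apply_left _ _

lemma adjSwap_right {m i : ℕ} (h : i + 1 < m) :
    (adjSwap m i h) ⟨i + 1, h⟩ = ⟨i, by omega⟩ := Equiv.swap_apply_right _ _

lemma invCount_mul_adjSwap_asc {m i : ℕ} (h : i + 1 < m) (w : Equiv.Perm (Fin m))
    (ha : w ⟨i, by omega⟩ < w ⟨i + 1, h⟩) :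
    invCount (w * adjSwap m i h) = invCount w + 1 := by
  set s := adjSwap m i h with hsdef
  set q : Fin m × Fin m := (⟨i, by omega⟩, ⟨i + 1, h⟩) with hq
  have hs : ∀ p : Fin m × Fin m, p.1 < p.2 → p ≠ q → s p.1 < s p.2 ∧ (s p.1, s p.2) ≠ q := by
    rintro ⟨a, b⟩ hab hne
    dsimp only at hab ⊢
    have h1 := adjSwap_val h a
    have h2 := adjSwap_val h b
    rw [← hsdef] at h1 h2
    rw [Fin.lt_def] at hab
    have hne' : ¬((a : ℕ) = i ∧ (b : ℕ) = i + 1) := by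
      intro hc
      exact hne (Prod.ext (Fin.ext hc.1) (Fin.ext hc.2))
    constructor
    · rw [Fin.lt_def]
      split_ifs at h1 h2 <;> omega
    · intro hc
      rw [Prod.ext_iff, Fin.ext_iff, Fin.ext_iff] at hc
      simp only [hq] at hc
      split_ifs at h1 h2 <;> omega
  -- the two "truncated" inversion sets
  set A' := Finset.univ.filter
    (fun p : Fin m × Fin m => p ≠ q ∧ p.1 < p.2 ∧ (w * s) p.2 < (w * s) p.1) with hA'
  set B' := Finset.univ.filter
    (fun p : Fin m × Fin m => p ≠ q ∧ p.1 < p.2 ∧ w p.2 < w p.1) with hB'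
  have hcard : A'.card = B'.card := by
    apply Finset.card_nbij' (fun p => (s p.1, s p.2)) (fun p => (s p.1, s p.2))
    · rintro ⟨a, b⟩ hp
      simp only [hA', Finset.mem_coe, Finset.mem_filter] at hp
      obtain ⟨-, hne, hab, hinv⟩ := hp
      obtain ⟨hlt, hne'⟩ := hs _ hab hne
      simp only [hB', Finset.mem_coe, Finset.mem_filter, Finset.mem_univ, true_and]
      exact ⟨hne', hlt, hinv⟩
    · rintro ⟨a, b⟩ hp
      simp only [hB', Finset.mem_coe, Finset.mem_filter] at hp
      obtain ⟨-, hne, hab, hinv⟩ := hp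
      obtain ⟨hlt, hne'⟩ := hs _ hab hne
      simp only [hA', Finset.mem_coe, Finset.mem_filter, Finset.mem_univ, true_and]
      refine ⟨hne', hlt, ?_⟩
      show w (s (s b)) < w (s (s a))
      rwa [hsdef, adjSwap_apply_self, adjSwap_apply_self]
    · rintro ⟨a, b⟩ -
      simp [hsdef, adjSwap_apply_self]
    · rintro ⟨a, b⟩ -
      simp [hsdef, adjSwap_apply_self]
  have hPq : q.1 < q.2 ∧ (w * s) q.2 < (w * s) q.1 := by
    refine ⟨by simp [hq, Fin.lt_def], ?_⟩
    show w (s q.2) < w (s q.1)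
    rw [hq, hsdef, adjSwap_left, adjSwap_right]
    exact ha
  have hQq : ¬(q.1 < q.2 ∧ w q.2 < w q.1) := by
    rintro ⟨-, hc⟩
    exact absurd ha (not_lt.2 hc.le)
  have e1 : Finset.univ.filter
      (fun p : Fin m × Fin m => p.1 < p.2 ∧ (w * s) p.2 < (w * s) p.1) = insert q A' := by
    ext p
    simp only [hA', Finset.mem_filter, Finset.mem_insert, Finset.mem_univ, true_and]
    constructor
    · intro hp
      by_cases hpq : p = q
      · exact Or.inl hpq
      · exact Or.inr ⟨hpq, hp⟩
    · rintro (rfl | ⟨-, hp⟩)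
      · exact hPq
      · exact hp
  have e2 : Finset.univ.filter
      (fun p : Fin m × Fin m => p.1 < p.2 ∧ w p.2 < w p.1) = B' := by
    ext p
    simp only [hB', Finset.mem_filter, Finset.mem_univ, true_and]
    constructor
    · intro hp
      refine ⟨?_, hp⟩
      rintro rfl
      exact hQq hp
    · exact fun hp => hp.2
  have hqA : q ∉ A' := by
    intro hc; rw [hA'] at hc; exact (Finset.mem_filter.1 hc).2.1 rfl
  rw [invCount, invCount, e1, e2, Finset.card_insert_of_notMem hqA, hcard]

lemma invCount_mul_adjSwap_desc {m i : ℕ} (h : i + 1 < m) (w : Equiv.Perm (Fin m))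
    (hd : w ⟨i + 1, h⟩ < w ⟨i, by omega⟩) :
    invCount (w * adjSwap m i h) + 1 = invCount w := by
  have h2 : (w * adjSwap m i h) ⟨i, by omega⟩ < (w * adjSwap m i h) ⟨i + 1, h⟩ := by
    show w (adjSwap m i h ⟨i, by omega⟩) < w (adjSwap m i h ⟨i + 1, h⟩)
    rwa [adjSwap_left, adjSwap_right]
  have := invCount_mul_adjSwap_asc h (w * adjSwap m i h) h2
  rw [mul_assoc] at this
  rw [show adjSwap m i h * adjSwap m i h = 1 from Equiv.swap_mul_self _ _] at this
  simpa using this.symm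

lemma invCount_one {m : ℕ} : invCount (1 : Equiv.Perm (Fin m)) = 0 := by
  simp only [invCount, Finset.card_eq_zero, Finset.filter_eq_empty_iff]
  rintro ⟨a, b⟩ -
  simp only [Equiv.Perm.one_apply, not_and]
  exact fun h => not_lt.2 h.le

lemma invCount_adjSwap {m i : ℕ} (h : i + 1 < m) : invCount (adjSwap m i h) = 1 := by
  have := invCount_mul_adjSwap_asc h 1 (by simp [Fin.lt_def])
  rwa [one_mul, invCount_one, zero_add] at this

lemma invCount_mul_le {m : ℕ} (u v : Equiv.Perm (Fin m)) :
    invCount (u * v) ≤ invCount u + invCount v := by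
  classical
  set A := Finset.univ.filter
    (fun p : Fin m × Fin m => p.1 < p.2 ∧ (u * v) p.2 < (u * v) p.1) with hA
  have hsplit :
      (A.filter (fun p => v p.2 < v p.1)).card + (A.filter (fun p => ¬ v p.2 < v p.1)).card
        = A.card := Finset.card_filter_add_card_filter_not _
  have h1 : A.filter (fun p => v p.2 < v p.1) ⊆
      Finset.univ.filter (fun p : Fin m × Fin m => p.1 < p.2 ∧ v p.2 < v p.1) := by
    intro p hp
    simp only [hA, Finset.mem_filter, Finset.mem_univ, true_and] at hp ⊢
    exact ⟨hp.1.1, hp.2⟩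
  have h2 : (A.filter (fun p => ¬ v p.2 < v p.1)).card ≤
      (Finset.univ.filter (fun p : Fin m × Fin m => p.1 < p.2 ∧ u p.2 < u p.1)).card := by
    apply Finset.card_le_card_of_injOn (fun p => (v p.1, v p.2))
    · rintro ⟨a, b⟩ hp
      simp only [hA, Finset.mem_coe, Finset.mem_filter, Finset.mem_univ, true_and] at hp ⊢
      obtain ⟨⟨hab, hinv⟩, hnv⟩ := hp
      have hne : v a ≠ v b := fun hc => absurd (v.injective hc) hab.ne
      exact ⟨lt_of_le_of_ne (not_lt.1 hnv) hne, hinv⟩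
    · rintro ⟨a, b⟩ - ⟨a', b'⟩ - hee
      simp only [Prod.ext_iff] at hee ⊢
      exact ⟨v.injective hee.1, v.injective hee.2⟩
  calc invCount (u * v) = A.card := rfl
    _ = _ + _ := hsplit.symm
    _ ≤ invCount v + invCount u := Nat.add_le_add (Finset.card_le_card h1) h2
    _ = invCount u + invCount v := Nat.add_comm _ _

lemma rweak_refl {m : ℕ} (x : Equiv.Perm (Fin m)) : rweak x x := by
  simp [rweak, invCount_one]

lemma rweak_trans {m : ℕ} {x y z : Equiv.Perm (Fin m)}
    (h1 : rweak x y) (h2 : rweak y z) : rweak x z := by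
  unfold rweak at *
  have ha : invCount (x⁻¹ * z) ≤ invCount (x⁻¹ * y) + invCount (y⁻¹ * z) := by
    have := invCount_mul_le (x⁻¹ * y) (y⁻¹ * z)
    rwa [show x⁻¹ * y * (y⁻¹ * z) = x⁻¹ * z by group] at this
  have hb : invCount z ≤ invCount x + invCount (x⁻¹ * z) := by
    have := invCount_mul_le x (x⁻¹ * z)
    rwa [show x * (x⁻¹ * z) = z by group] at this
  omega

lemma eq_one_of_invCount_eq_zero {m : ℕ} {u : Equiv.Perm (Fin m)}
    (h : invCount u = 0) : u = 1 := by
  have hmono : StrictMono u := by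
    intro a b hab
    have hnot : ¬(a < b ∧ u b < u a) := by
      intro hc
      rw [invCount, Finset.card_eq_zero, Finset.filter_eq_empty_iff] at h
      exact h (Finset.mem_univ (a, b)) hc
    have hne : u a ≠ u b := fun hc => absurd (u.injective hc) hab.ne
    rcases lt_or_gt_of_ne hne with h' | h'
    · exact h'
    · exact absurd ⟨hab, h'⟩ hnot
  have hfun : (u : Fin m → Fin m) = id := by
    refine (hmono.range_inj strictMono_id).1 ?_
    rw [Set.range_eq_univ.2 u.surjective, Set.range_id]
  ext a
  have := congrFun hfun a
  simp only [id] at this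
  simp [this]

lemma rweak_antisymm {m : ℕ} {x y : Equiv.Perm (Fin m)}
    (h1 : rweak x y) (h2 : rweak y x) : x = y := by
  unfold rweak at *
  have hz : invCount (x⁻¹ * y) = 0 := by
    have ha := invCount_mul_le x (x⁻¹ * y)
    have hb := invCount_mul_le y (y⁻¹ * x)
    omega
  have := eq_one_of_invCount_eq_zero hz
  have : y = x * 1 := by rw [← this]; group
  simp [this]

lemma revPerm_mul_self {m : ℕ} : (Fin.revPerm : Equiv.Perm (Fin m)) * Fin.revPerm = 1 := by
  ext x
  simp [Fin.rev_rev]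

lemma revPerm_inv {m : ℕ} : (Fin.revPerm : Equiv.Perm (Fin m))⁻¹ = Fin.revPerm := by
  rfl

lemma invCount_conj_rev {m : ℕ} (u : Equiv.Perm (Fin m)) :
    invCount (Fin.revPerm * u * Fin.revPerm) = invCount u := by
  unfold invCount
  apply Finset.card_nbij' (fun p : Fin m × Fin m => (Fin.rev p.2, Fin.rev p.1))
    (fun p : Fin m × Fin m => (Fin.rev p.2, Fin.rev p.1))
  · rintro ⟨a, b⟩ hp
    simp only [Finset.mem_coe, Finset.mem_filter, Finset.mem_univ, true_and, Equiv.Perm.mul_apply,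
      Fin.revPerm_apply, Fin.rev_rev, Fin.rev_lt_rev] at hp ⊢
    exact hp
  · rintro ⟨a, b⟩ hp
    simp only [Finset.mem_coe, Finset.mem_filter, Finset.mem_univ, true_and, Equiv.Perm.mul_apply,
      Fin.revPerm_apply, Fin.rev_rev, Fin.rev_lt_rev] at hp ⊢
    exact hp
  · rintro ⟨a, b⟩ -
    simp [Fin.rev_rev]
  · rintro ⟨a, b⟩ -
    simp [Fin.rev_rev]

lemma adjSwap_inv {m i : ℕ} (h : i + 1 < m) : (adjSwap m i h)⁻¹ = adjSwap m i h :=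
  Equiv.swap_inv _ _

lemma rev_conj_adjSwap {m i : ℕ} (h : i + 1 < m) :
    Fin.revPerm * adjSwap m i h * Fin.revPerm = adjSwap m (m - 2 - i) (by omega) := by
  have := (Equiv.swap_apply_apply (Fin.revPerm : Equiv.Perm (Fin m))
    ⟨i, by omega⟩ ⟨i + 1, h⟩).symm
  rw [revPerm_inv] at this
  rw [show adjSwap m i h = Equiv.swap (⟨i, by omega⟩ : Fin m) ⟨i + 1, h⟩ from rfl, this]
  have e1 : (Fin.revPerm (⟨i, by omega⟩ : Fin m)) = ⟨m - 1 - i, by omega⟩ := by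
    apply Fin.ext
    simp [Fin.val_rev]
    omega
  have e2 : (Fin.revPerm (⟨i + 1, h⟩ : Fin m)) = ⟨m - 2 - i, by omega⟩ := by
    apply Fin.ext
    simp [Fin.val_rev]
    omega
  rw [e1, e2, Equiv.swap_comm]
  unfold adjSwap
  congr 1 <;> exact Fin.ext (by simp; omega)

lemma adjSwap_apply_of_ne {m i : ℕ} (h : i + 1 < m) (x : Fin m)
    (h1 : (x : ℕ) ≠ i) (h2 : (x : ℕ) ≠ i + 1) : (adjSwap m i h) x = x := by
  apply Fin.ext
  rw [adjSwap_val]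
  simp [h1, h2]

lemma adjSwap_conj_comm {m i j : ℕ} (hi : i + 1 < m) (hj : j + 1 < m)
    (hij : i + 1 < j) :
    adjSwap m j hj * adjSwap m i hi * adjSwap m j hj = adjSwap m i hi := by
  have := (Equiv.swap_apply_apply (adjSwap m j hj) (⟨i, by omega⟩ : Fin m) ⟨i + 1, hi⟩).symm
  rw [adjSwap_inv] at this
  rw [show adjSwap m i hi = Equiv.swap (⟨i, by omega⟩ : Fin m) ⟨i + 1, hi⟩ from rfl, this]
  rw [adjSwap_apply_of_ne hj _ (by simp; omega) (by simp; omega),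
    adjSwap_apply_of_ne hj _ (by simp; omega) (by simp; omega)]

lemma adjSwap_comm {m i j : ℕ} (hi : i + 1 < m) (hj : j + 1 < m) (hij : i + 1 < j) :
    adjSwap m i hi * adjSwap m j hj = adjSwap m j hj * adjSwap m i hi := by
  have h := adjSwap_conj_comm hi hj hij
  calc adjSwap m i hi * adjSwap m j hj
      = (adjSwap m j hj * adjSwap m i hi * adjSwap m j hj) * adjSwap m j hj := by rw [h]
    _ = adjSwap m j hj * adjSwap m i hi * (adjSwap m j hj * adjSwap m j hj) := by
        simp [mul_assoc]
    _ = adjSwap m j hj * adjSwap m i hi := by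
        rw [show adjSwap m j hj * adjSwap m j hj = 1 from Equiv.swap_mul_self _ _, mul_one]

-- === auxiliary lemmas (to be inserted before the theorem) ===

lemma descent_rev {n : ℕ} {w : Equiv.Perm (Fin (2 * n))} (hw : w ∈ hyperoctahedral n)
    {i : ℕ} (h : i + 1 < 2 * n) (hd : w ⟨i + 1, h⟩ < w ⟨i, by omega⟩)
    (h2 : (2 * n - 2 - i) + 1 < 2 * n) :
    w ⟨2 * n - 2 - i + 1, h2⟩ < w ⟨2 * n - 2 - i, by omega⟩ := by
  have hw' : ∀ x : Fin (2 * n), w (Fin.rev x) = Fin.rev (w x) := hw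
  have e1 : (⟨2 * n - 2 - i + 1, h2⟩ : Fin (2 * n)) = Fin.rev ⟨i, by omega⟩ :=
    Fin.ext (by simp [Fin.val_rev]; omega)
  have e2 : (⟨2 * n - 2 - i, by omega⟩ : Fin (2 * n)) = Fin.rev ⟨i + 1, h⟩ :=
    Fin.ext (by simp [Fin.val_rev]; omega)
  calc w ⟨2 * n - 2 - i + 1, h2⟩ = Fin.rev (w ⟨i, by omega⟩) :=
        (congrArg w e1).trans (hw' _)
    _ < Fin.rev (w ⟨i + 1, h⟩) := Fin.rev_lt_rev.2 hd
    _ = w ⟨2 * n - 2 - i, by omega⟩ := ((congrArg w e2).trans (hw' _)).symm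

lemma adjSwap_congr {m i j : ℕ} (h : i + 1 < m) (h' : j + 1 < m) (e : i = j) :
    adjSwap m i h = adjSwap m j h' := by subst e; rfl

lemma desc_of_invCount_lt {m : ℕ} (x : Equiv.Perm (Fin m)) {i : ℕ} (hi : i + 1 < m)
    (hlt : invCount (x * adjSwap m i hi) < invCount x) :
    x ⟨i + 1, hi⟩ < x ⟨i, by omega⟩ := by
  rcases lt_trichotomy (x ⟨i, by omega⟩) (x ⟨i + 1, hi⟩) with h' | h' | h'
  · have := invCount_mul_adjSwap_asc hi x h'
    omega
  · exact absurd (x.injective h') (by simp [Fin.ext_iff])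
  · exact h'

lemma invCount_two_desc {m : ℕ} (x : Equiv.Perm (Fin m)) {i j : ℕ}
    (hi : i + 1 < m) (hj : j + 1 < m) (hij : i + 1 < j)
    (d1 : x ⟨i + 1, hi⟩ < x ⟨i, by omega⟩) (d2 : x ⟨j + 1, hj⟩ < x ⟨j, by omega⟩) :
    invCount (x * adjSwap m i hi * adjSwap m j hj) + 2 = invCount x := by
  have h1 := invCount_mul_adjSwap_desc hi x d1
  have d2' : (x * adjSwap m i hi) ⟨j + 1, hj⟩ < (x * adjSwap m i hi) ⟨j, by omega⟩ := by
    show x (adjSwap m i hi _) < x (adjSwap m i hi _)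
    rw [adjSwap_apply_of_ne hi _ (by simp; omega) (by simp; omega),
      adjSwap_apply_of_ne hi _ (by simp; omega) (by simp; omega)]
    exact d2
  have h2 := invCount_mul_adjSwap_desc hj (x * adjSwap m i hi) d2'
  omega


lemma conj_rev_mul {m : ℕ} (u v : Equiv.Perm (Fin m)) :
    (Fin.revPerm * u * Fin.revPerm) * (Fin.revPerm * v * Fin.revPerm) =
      Fin.revPerm * (u * v) * Fin.revPerm := by
  calc (Fin.revPerm * u * Fin.revPerm) * (Fin.revPerm * v * Fin.revPerm)
      = Fin.revPerm * u * ((Fin.revPerm * Fin.revPerm) * (v * Fin.revPerm)) := by group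
    _ = _ := by rw [revPerm_mul_self]; group

lemma conj_rev_inv {m : ℕ} (u : Equiv.Perm (Fin m)) :
    (Fin.revPerm * u * Fin.revPerm)⁻¹ = Fin.revPerm * u⁻¹ * Fin.revPerm := by
  refine inv_eq_of_mul_eq_one_right ?_
  rw [conj_rev_mul]
  simp [revPerm_mul_self]

lemma conj_rev_conj_rev {m : ℕ} (u : Equiv.Perm (Fin m)) :
    Fin.revPerm * (Fin.revPerm * u * Fin.revPerm) * Fin.revPerm = u := by
  calc Fin.revPerm * (Fin.revPerm * u * Fin.revPerm) * Fin.revPerm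
      = (Fin.revPerm * Fin.revPerm) * u * (Fin.revPerm * Fin.revPerm) := by group
    _ = u := by rw [revPerm_mul_self]; simp

lemma rweak_conj_rev {m : ℕ} {x y : Equiv.Perm (Fin m)} (h : rweak x y) :
    rweak (Fin.revPerm * x * Fin.revPerm) (Fin.revPerm * y * Fin.revPerm) := by
  unfold rweak at h ⊢
  rw [conj_rev_inv, conj_rev_mul, invCount_conj_rev, invCount_conj_rev, invCount_conj_rev]
  exact h

lemma mem_hyper_of_conj {n : ℕ} {z : Equiv.Perm (Fin (2 * n))}
    (h : Fin.revPerm * z * Fin.revPerm = z) : z ∈ hyperoctahedral n := by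
  intro x
  have h2 := congrArg (fun p : Equiv.Perm (Fin (2 * n)) => p (Fin.rev x)) h
  simp only [Equiv.Perm.mul_apply, Fin.revPerm_apply, Fin.rev_rev] at h2
  exact h2.symm

lemma conj_of_mem_hyper {n : ℕ} {w : Equiv.Perm (Fin (2 * n))}
    (hw : w ∈ hyperoctahedral n) : Fin.revPerm * w * Fin.revPerm = w := by
  ext x
  simp only [Equiv.Perm.mul_apply, Fin.revPerm_apply]
  rw [hw x, Fin.rev_rev]

lemma targetsA_conj {n : ℕ} {w : Equiv.Perm (Fin (2 * n))} (hw : w ∈ hyperoctahedral n) :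
    ∀ a ∈ targetsA w, Fin.revPerm * a * Fin.revPerm ∈ targetsA w := by
  intro a ha
  rw [targetsA, Set.mem_insert_iff] at ha ⊢
  rcases ha with rfl | ⟨i, hi, hd, rfl⟩
  · exact Or.inl (conj_of_mem_hyper hw)
  · right
    refine ⟨2 * n - 2 - i, by omega, descent_rev hw hi hd (by omega), ?_⟩
    rw [← conj_rev_mul, conj_of_mem_hyper hw, rev_conj_adjSwap hi]

/-- for `w ∈ B_n ⊆ S_{2n}`, the pop-stack-sorting map of `S_{2n}`
(the meet of `{ws : s ∈ D_R(w)} ∪ {w}` in the right weak order of `S_{2n}`) agrees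
with the Coxeter pop-stack-sorting operator of `B_n` (the corresponding meet taken in
the right weak order of `B_n`). -/
theorem popA_eq_popB (n : ℕ) (hn : 1 ≤ n) (w zA zB : Equiv.Perm (Fin (2 * n)))
    (hw : w ∈ hyperoctahedral n)
    (hzA : IsMeetOn Set.univ (targetsA w) zA)
    (hzB : IsMeetOn (hyperoctahedral n) (targetsB n hn w) zB) :
    zA = zB := by
  obtain ⟨-, hzAlb, hzAmax⟩ := hzA
  obtain ⟨-, hzBlb, hzBmax⟩ := hzB
  -- Step 1 : zA is a lower bound of targetsB
  have hlbB : ∀ a ∈ targetsB n hn w, rweak zA a := by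
    intro a ha
    rw [targetsB, Set.mem_insert_iff] at ha
    rcases ha with rfl | ha
    · exact hzAlb _ (Set.mem_insert _ _)
    obtain ⟨i, hi, hd, rfl⟩ := ha
    by_cases hii : i + 1 < n
    · simp only [bGen]
      rw [dif_pos hii]
      have hib : i + 1 < 2 * n := by omega
      set j := 2 * n - 2 - i with hjdef
      have hjb : j + 1 < 2 * n := by omega
      have hij : i + 1 < j := by omega
      have hdi : w ⟨i + 1, hib⟩ < w ⟨i, by omega⟩ := hd
      have hdj : w ⟨j + 1, hjb⟩ < w ⟨j, by omega⟩ := descent_rev hw hib hdi hjb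
      have r1 : rweak zA w := hzAlb _ (Set.mem_insert _ _)
      have r2 : rweak zA (w * adjSwap (2 * n) i hib) := by
        refine hzAlb _ ?_
        right
        exact ⟨i, hib, hdi, rfl⟩
      have r3 : rweak zA (w * adjSwap (2 * n) j hjb) := by
        refine hzAlb _ ?_
        right
        exact ⟨j, hjb, hdj, rfl⟩
      have hwi := invCount_mul_adjSwap_desc hib w hdi
      have hwj := invCount_mul_adjSwap_desc hjb w hdj
      have hwij := invCount_two_desc w hib hjb hij hdi hdj
      rw [rweak] at r1 r2 r3
      rw [← mul_assoc] at r2 r3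
      set x := zA⁻¹ * w with hx
      have dxi : x ⟨i + 1, hib⟩ < x ⟨i, by omega⟩ :=
        desc_of_invCount_lt x hib (by omega)
      have dxj : x ⟨j + 1, hjb⟩ < x ⟨j, by omega⟩ :=
        desc_of_invCount_lt x hjb (by omega)
      have hxij := invCount_two_desc x hib hjb hij dxi dxj
      rw [rweak]
      rw [show zA⁻¹ * (w * (adjSwap (2 * n) i hib * adjSwap (2 * n) j hjb))
          = x * adjSwap (2 * n) i hib * adjSwap (2 * n) j hjb by rw [hx]; group]
      rw [show w * (adjSwap (2 * n) i hib * adjSwap (2 * n) j hjb)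
          = w * adjSwap (2 * n) i hib * adjSwap (2 * n) j hjb from (mul_assoc _ _ _).symm]
      omega
    · refine hzAlb _ ?_
      right
      refine ⟨i, by omega, hd, ?_⟩
      simp only [bGen]
      rw [dif_neg hii]
  -- Step 2 : zA lies in the hyperoctahedral subgroup
  have hφlb : ∀ a ∈ targetsA w, rweak (Fin.revPerm * zA * Fin.revPerm) a := by
    intro a ha
    have h1 := hzAlb _ (targetsA_conj hw a ha)
    have h2 := rweak_conj_rev h1
    rwa [conj_rev_conj_rev] at h2
  have hAhyp : zA ∈ hyperoctahedral n := by
    apply mem_hyper_of_conj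
    have h1 : rweak (Fin.revPerm * zA * Fin.revPerm) zA := hzAmax _ (Set.mem_univ _) hφlb
    have h2 : rweak zA (Fin.revPerm * zA * Fin.revPerm) := by
      have := rweak_conj_rev h1
      rwa [conj_rev_conj_rev] at this
    exact rweak_antisymm h1 h2
  -- Step 3 : zB is a lower bound of targetsA
  have hlbA : ∀ a ∈ targetsA w, rweak zB a := by
    intro a ha
    rw [targetsA, Set.mem_insert_iff] at ha
    rcases ha with rfl | ha
    · exact hzBlb _ (Set.mem_insert _ _)
    obtain ⟨i, hib, hd, rfl⟩ := ha
    rcases lt_trichotomy (i + 1) n with hii | hii | hii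
    · have hin : i < n := by omega
      set j := 2 * n - 2 - i with hjdef
      have hjb : j + 1 < 2 * n := by omega
      have hij : i + 1 < j := by omega
      have hdj : w ⟨j + 1, hjb⟩ < w ⟨j, by omega⟩ := descent_rev hw hib hd hjb
      have rb : rweak zB (w * bGen n i hn hin) := by
        refine hzBlb _ ?_
        right
        exact ⟨i, hin, hd, rfl⟩
      have hbg : bGen n i hn hin = adjSwap (2 * n) i hib * adjSwap (2 * n) j hjb := by
        simp only [bGen]
        rw [dif_pos hii]
      have hwi := invCount_mul_adjSwap_desc hib w hd
      have hwij := invCount_two_desc w hib hjb hij hd hdj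
      have r2 : rweak (w * bGen n i hn hin) (w * adjSwap (2 * n) i hib) := by
        rw [rweak, hbg]
        rw [show (w * (adjSwap (2 * n) i hib * adjSwap (2 * n) j hjb))⁻¹ *
            (w * adjSwap (2 * n) i hib) = (adjSwap (2 * n) j hjb)⁻¹ by group]
        rw [adjSwap_inv, invCount_adjSwap]
        rw [show w * (adjSwap (2 * n) i hib * adjSwap (2 * n) j hjb)
            = w * adjSwap (2 * n) i hib * adjSwap (2 * n) j hjb from (mul_assoc _ _ _).symm]
        omega
      exact rweak_trans rb r2
    · refine hzBlb _ ?_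
      right
      refine ⟨i, by omega, hd, ?_⟩
      simp only [bGen]
      rw [dif_neg (by omega)]
    · have hi'n : 2 * n - 2 - i < n := by omega
      set i' := 2 * n - 2 - i with hi'def
      have hi'b : i' + 1 < 2 * n := by omega
      have hii' : i' + 1 < n := by omega
      have hi'i : i' + 1 < i := by omega
      have hd' : w ⟨i' + 1, hi'b⟩ < w ⟨i', by omega⟩ := descent_rev hw hib hd hi'b
      have hbg : bGen n i' hn hi'n = adjSwap (2 * n) i' hi'b * adjSwap (2 * n) i hib := by
        simp only [bGen]
        rw [dif_pos hii']
        congr 1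
        exact adjSwap_congr _ _ (by omega)
      have rb : rweak zB (w * bGen n i' hn hi'n) := by
        refine hzBlb _ ?_
        right
        exact ⟨i', hi'n, hd', rfl⟩
      have hwi := invCount_mul_adjSwap_desc hib w hd
      have hwij := invCount_two_desc w hi'b hib hi'i hd' hd
      have r2 : rweak (w * bGen n i' hn hi'n) (w * adjSwap (2 * n) i hib) := by
        rw [rweak, hbg]
        rw [show (w * (adjSwap (2 * n) i' hi'b * adjSwap (2 * n) i hib))⁻¹ *
            (w * adjSwap (2 * n) i hib) =
            (adjSwap (2 * n) i hib)⁻¹ * (adjSwap (2 * n) i' hi'b)⁻¹ * adjSwap (2 * n) i hib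
            by group]
        rw [adjSwap_inv, adjSwap_inv, adjSwap_conj_comm hi'b hib hi'i, invCount_adjSwap]
        rw [show w * (adjSwap (2 * n) i' hi'b * adjSwap (2 * n) i hib)
            = w * adjSwap (2 * n) i' hi'b * adjSwap (2 * n) i hib from (mul_assoc _ _ _).symm]
        omega
      exact rweak_trans rb r2
  -- Conclusion
  have h1 : rweak zA zB := hzBmax zA hAhyp hlbB
  have h2 : rweak zB zA := hzAmax zB (Set.mem_univ _) hlbA
  exact rweak_antisymm h1 h2

end HyperPop
end
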